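/- For every consistent layered automaton A over a finite alphabet Σ, the simple-by-priorities alternating parity automaton ⟦A⟧ is 0-1 probabilistic: for every infinite word w, the random walk of ⟦A⟧ over w from the initial state produces a run satisfying the parity condition with probability 1 if w ∈ L(⟦A⟧), and with probability 0 if w ∉ L(⟦A⟧). -/

import Mathlib

open scoped Classical

noncomputable section

/-! ### Infinite words and the parity condition -/

/-- The minimal value occurring infinitely often in a sequence of priorities;
for (eventually) bounded sequences this is the `liminf`. -/
def minInfOften (pi : ℕ → ℕ) : ℕ := sInf {x : ℕ | ∀ N : ℕ, ∃ n : ℕ, N ≤ n ∧ pi n = x}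

/-- The (min-)parity acceptance condition: the liminf of the priorities is even. -/
def ParityAccept (pi : ℕ → ℕ) : Prop := Even (minInfOften pi)

/-- Prepend a finite word to an infinite word. -/
def prependW {α : Type} (u : List α) (w : ℕ → α) : ℕ → α := fun i =>
  if h : i < u.length then u.get ⟨i, h⟩ else w (i - u.length)

/-- The prefix of length `n` of an infinite word, as a list. -/
def wordPrefix {α : Type} (w : ℕ → α) (n : ℕ) : List α := List.ofFn (fun i : Fin n => w i)

/-- Drop the first `n` letters of an infinite word. -/
def wordDrop {α : Type} (w : ℕ → α) (n : ℕ) : ℕ → α := fun i => w (n + i)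

/-- The periodic infinite word `v^ω` (junk if `v = []`). -/
def perWord {α : Type} [Inhabited α] (v : List α) : ℕ → α := fun i => v.getD (i % v.length) default

/-! ### Layered automata -/

/-- A layered automaton over the alphabet `α` with `d` layers.  The (disjoint) layers
are encoded by the function `layer : Q → [1,d]`; each layer is a deterministic
transition system (partial transition function `δ`, which stays inside the layer);
`μ` sends each state of layer `x+1` to its parent in layer `x` (and is the identity
on layer `1`) and is a morphism of transition systems; layer `1` is complete, carries
the initial state, and all its states are reachable from the initial state. -/
structure Layered (Q α : Type) (d : ℕ) where
  layer : Q → ℕ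
  layer_pos : ∀ q, 1 ≤ layer q
  layer_le : ∀ q, layer q ≤ d
  δ : Q → α → Option Q
  δ_layer : ∀ q a q', δ q a = some q' → layer q' = layer q
  μ : Q → Q
  μ_layer : ∀ q, 1 < layer q → layer (μ q) + 1 = layer q
  μ_id : ∀ q, layer q = 1 → μ q = q
  μ_morph : ∀ q a q', 1 < layer q → δ q a = some q' → δ (μ q) a = some (μ q')
  init : Q
  init_layer : layer init = 1
  complete1 : ∀ q a, layer q = 1 → (δ q a).isSome = true
  reach1 : ∀ q, layer q = 1 →
    Relation.ReflTransGen (fun p p' => layer p = 1 ∧ ∃ a, δ p a = some p') init q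

namespace Layered

variable {Q R α : Type} {d d' : ℕ}

/-- The run of the (deterministic) layer transition systems on a finite word. -/
def runList (A : Layered Q α d) : Q → List α → Option Q
  | q, [] => some q
  | q, a :: u =>
    match A.δ q a with
    | some q' => runList A q' u
    | none => none

/-- `μ̂_x q`: the ancestor of `q` in layer `x` (image under the composed morphisms). -/
def muHat (A : Layered Q α d) (x : ℕ) (q : Q) : Q := (A.μ)^[A.layer q - x] q

/-- A leaf state: a state that is not in the image of any of the morphisms `μ_x`. -/
def IsLeaf (A : Layered Q α d) (q : Q) : Prop := ∀ p, 1 < A.layer p → A.μ p ≠ q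

/-- `layer(q,a)`: the largest layer `x ≤ layer q` in which `δ_x (μ̂_x q) a` is defined. -/
def layerOf (A : Layered Q α d) (q : Q) (a : α) : ℕ :=
  Nat.findGreatest (fun x => (A.δ (A.muHat x q) a).isSome = true) (A.layer q)

/-- A state `p` is an ancestor of `q`. -/
def IsAncestor (A : Layered Q α d) (p q : Q) : Prop :=
  A.layer p ≤ A.layer q ∧ A.muHat (A.layer p) q = p

/-! #### Safe languages and strong acceptance -/

/-- Membership of a finite word in the `x`-safe language of `q`. -/
def SafeFin (A : Layered Q α d) (x : ℕ) (q : Q) (u : List α) : Prop :=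
  (A.runList (A.muHat x q) u).isSome = true

/-- Membership of an infinite word in the `x`-safe language of `q`. -/
def SafeInf (A : Layered Q α d) (x : ℕ) (q : Q) (w : ℕ → α) : Prop :=
  ∀ n : ℕ, A.SafeFin x q (wordPrefix w n)

/-- `w` is strongly accepted by the state `p` (which lies in the even layer `x = layer p`):
`w` is `x`-safe from `p` and no decomposition `w = u·w'` admits a state `p'` of layer `x+1`
with a `u`-run from `p` to the parent of `p'` in `T_x` such that `w'` is `(x+1)`-safe from `p'`. -/
def StronglyAcc (A : Layered Q α d) (p : Q) (w : ℕ → α) : Prop :=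
  Even (A.layer p) ∧ A.SafeInf (A.layer p) p w ∧
  ∀ (n : ℕ) (p' : Q), A.layer p' = A.layer p + 1 →
    A.runList p (wordPrefix w n) = some (A.μ p') →
    ¬ A.SafeInf (A.layer p') p' (wordDrop w n)

/-- `w` is strongly rejected by `p` (lying in an odd layer). -/
def StronglyRej (A : Layered Q α d) (p : Q) (w : ℕ → α) : Prop :=
  Odd (A.layer p) ∧ A.SafeInf (A.layer p) p w ∧
  ∀ (n : ℕ) (p' : Q), A.layer p' = A.layer p + 1 →
    A.runList p (wordPrefix w n) = some (A.μ p') →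
    ¬ A.SafeInf (A.layer p') p' (wordDrop w n)

/-- Consistency: no two states with the same layer-1 ancestor strongly accept
resp. strongly reject a common infinite word. -/
def Consistent (A : Layered Q α d) : Prop :=
  ¬ ∃ (p p' : Q) (w : ℕ → α), A.muHat 1 p = A.muHat 1 p' ∧
      A.StronglyAcc p w ∧ A.StronglyRej p' w

/-- `w` is ultimately safe in layer `x`, for the automaton started in the
layer-1 state `q0`. -/
def UltSafeFrom (A : Layered Q α d) (q0 : Q) (x : ℕ) (w : ℕ → α) : Prop :=
  ∃ (n : ℕ) (p : Q), A.layer p = x ∧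
    A.runList q0 (wordPrefix w n) = some (A.muHat 1 p) ∧
    A.SafeInf x p (wordDrop w n)

/-- Layered acceptance from `q0`: the maximal layer in which `w` is ultimately safe is even. -/
def LayeredAcceptFrom (A : Layered Q α d) (q0 : Q) (w : ℕ → α) : Prop :=
  ∃ x : ℕ, Even x ∧ A.UltSafeFrom q0 x w ∧ ∀ y : ℕ, A.UltSafeFrom q0 y w → y ≤ x

/-- Layered rejection from `q0`: the maximal layer in which `w` is ultimately safe is odd. -/
def LayeredRejectFrom (A : Layered Q α d) (q0 : Q) (w : ℕ → α) : Prop :=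
  ∃ x : ℕ, Odd x ∧ A.UltSafeFrom q0 x w ∧ ∀ y : ℕ, A.UltSafeFrom q0 y w → y ≤ x

/-! #### The semantics automaton `⟦A⟧` (a simple-by-priorities alternating parity automaton) -/

/-- The priority of the letter `a` in the state `q` of `⟦A⟧`. -/
def semPrio (A : Layered Q α d) (q : Q) (a : α) : ℕ := A.layerOf q a

/-- The transitions of `⟦A⟧` (between leaf states): `q —a→ q'` iff, for
`x = layer(q,a)`, we have `δ_x (μ̂_x q) a = μ̂_x q'`; the transition carries priority `x`. -/
def semStep (A : Layered Q α d) (q : Q) (a : α) (q' : Q) : Prop :=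
  A.IsLeaf q' ∧ A.δ (A.muHat (A.layerOf q a) q) a = some (A.muHat (A.layerOf q a) q')

/-- Runs of `⟦A⟧` over the infinite word `w`, starting in `p`. -/
def IsSemRun (A : Layered Q α d) (w : ℕ → α) (p : Q) (ρ : ℕ → Q) : Prop :=
  ρ 0 = p ∧ ∀ i : ℕ, A.semStep (ρ i) (w i) (ρ (i + 1))

/-- The sequence of priorities produced by a run of `⟦A⟧` over `w`. -/
def runPrios (A : Layered Q α d) (w : ℕ → α) (ρ : ℕ → Q) : ℕ → ℕ :=
  fun i => A.semPrio (ρ i) (w i)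

/-- A resolver for Eve in `⟦A⟧`: given the history (the finite run so far, as a list of
(state, letter) pairs), the current state and a letter of odd priority, it picks a successor. -/
def EveResolver (A : Layered Q α d) (σ : List (Q × α) → Q → α → Q) : Prop :=
  ∀ (h : List (Q × α)) (q : Q) (a : α), Odd (A.semPrio q a) → A.semStep q a (σ h q a)

/-- A resolver for Adam in `⟦A⟧` (resolving the even-priority steps). -/
def AdamResolver (A : Layered Q α d) (τ : List (Q × α) → Q → α → Q) : Prop :=
  ∀ (h : List (Q × α)) (q : Q) (a : α), Even (A.semPrio q a) → A.semStep q a (τ h q a)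

/-- A run is consistent with the Eve-resolver `σ`: every odd-priority step follows `σ`. -/
def ConsEve (A : Layered Q α d) (σ : List (Q × α) → Q → α → Q) (w : ℕ → α) (ρ : ℕ → Q) : Prop :=
  ∀ i : ℕ, Odd (A.semPrio (ρ i) (w i)) →
    ρ (i + 1) = σ (List.ofFn fun j : Fin i => (ρ (j : ℕ), w (j : ℕ))) (ρ i) (w i)

/-- A run is consistent with the Adam-resolver `τ`: every even-priority step follows `τ`. -/
def ConsAdam (A : Layered Q α d) (τ : List (Q × α) → Q → α → Q) (w : ℕ → α) (ρ : ℕ → Q) : Prop :=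
  ∀ i : ℕ, Even (A.semPrio (ρ i) (w i)) →
    ρ (i + 1) = τ (List.ofFn fun j : Fin i => (ρ (j : ℕ), w (j : ℕ))) (ρ i) (w i)

/-- Acceptance of `w` by `⟦A⟧` from the (leaf) state `p`: Eve has a winning strategy
in the game `G(⟦A⟧,w)`, i.e. a resolver all of whose consistent runs satisfy parity. -/
def SemAccept (A : Layered Q α d) (p : Q) (w : ℕ → α) : Prop :=
  ∃ σ : List (Q × α) → Q → α → Q, A.EveResolver σ ∧
    ∀ ρ : ℕ → Q, A.IsSemRun w p ρ → A.ConsEve σ w ρ → ParityAccept (A.runPrios w ρ)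

/-- Uniform semantic determinism: leaf states with the same layer-1 ancestor
recognise the same language in `⟦A⟧`. -/
def UnifSD (A : Layered Q α d) : Prop :=
  ∀ p q : Q, A.IsLeaf p → A.IsLeaf q → A.muHat 1 p = A.muHat 1 q →
    ∀ w : ℕ → α, (A.SemAccept p w ↔ A.SemAccept q w)

/-! #### Longest suffix resolvers -/

/-- `v` is a suffix-witness to `r`: the layer of `r` has a run labelled `v` ending in `r`. -/
def suffixReaches (A : Layered Q α d) (r : Q) (v : List α) : Prop :=
  ∃ p : Q, A.layer p = A.layer r ∧ A.runList p v = some r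

/-- The length of the longest suffix `v` of `u` such that the layer of `r` has a
run labelled `v` ending in `r`. -/
def longestSuffixLen (A : Layered Q α d) (u : List α) (r : Q) : ℕ :=
  Nat.findGreatest (fun k => k ≤ u.length ∧ A.suffixReaches r (u.drop (u.length - k))) u.length

/-- A longest suffix resolver for Eve, initialised to `u0`: a valid Eve-resolver that,
at a step of odd priority `x` after having read `v`, moves to an `a`-successor `q'`
maximising the length of the longest `(x+1)`-suffix of `u0·v·a` to `μ̂_{x+1} q'`. -/
def IsLongestSuffixResolverE (A : Layered Q α d) (u0 : List α)
    (σ : List (Q × α) → Q → α → Q) : Prop :=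
  A.EveResolver σ ∧
  ∀ (h : List (Q × α)) (q : Q) (a : α), Odd (A.semPrio q a) →
    ∀ q' : Q, A.semStep q a q' →
      A.longestSuffixLen (u0 ++ h.map Prod.snd ++ [a]) (A.muHat (A.semPrio q a + 1) q') ≤
      A.longestSuffixLen (u0 ++ h.map Prod.snd ++ [a]) (A.muHat (A.semPrio q a + 1) (σ h q a))

/-- A longest suffix resolver for Adam, initialised to `u0` (symmetric, for even priorities). -/
def IsLongestSuffixResolverA (A : Layered Q α d) (u0 : List α)
    (τ : List (Q × α) → Q → α → Q) : Prop :=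
  A.AdamResolver τ ∧
  ∀ (h : List (Q × α)) (q : Q) (a : α), Even (A.semPrio q a) →
    ∀ q' : Q, A.semStep q a q' →
      A.longestSuffixLen (u0 ++ h.map Prod.snd ++ [a]) (A.muHat (A.semPrio q a + 1) q') ≤
      A.longestSuffixLen (u0 ++ h.map Prod.snd ++ [a]) (A.muHat (A.semPrio q a + 1) (τ h q a))

/-! #### The random walk on `⟦A⟧` -/

/-- The uniform step probability of the random walk of `⟦A⟧`. -/
def stepProb (A : Layered Q α d) (q : Q) (a : α) (q' : Q) : ENNReal :=
  if A.semStep q a q' then ((Nat.card {p : Q // A.semStep q a p} : ENNReal))⁻¹ else 0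

/-- `m` is the Markov measure of the random walk of `⟦A⟧` over the word `w` started at `p`:
a probability measure on `ℕ → Q` whose cylinder probabilities are the products of the
uniform step probabilities. -/
def IsWalkMeasure [MeasurableSpace Q] (A : Layered Q α d) (w : ℕ → α) (p : Q)
    (m : MeasureTheory.Measure (ℕ → Q)) : Prop :=
  MeasureTheory.IsProbabilityMeasure m ∧
  ∀ (n : ℕ) (s : Fin (n + 1) → Q),
    m {ρ : ℕ → Q | ∀ i : Fin (n + 1), ρ (i : ℕ) = s i} =
      (if s 0 = p then 1 else 0) *
        ∏ i : Fin n, A.stepProb (s i.castSucc) (w (i : ℕ)) (s i.succ)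

/-! #### Normal form, centrality, safe minimality, central sequences -/

/-- Normal form: (N1) every layer `x ≥ 2` is a union of non-trivial SCCs, and
(N2) the safe language of every child is strictly smaller than that of its parent. -/
def NormalForm (A : Layered Q α d) : Prop :=
  ∀ q : Q, 2 ≤ A.layer q →
    (∀ (u : List α) (q' : Q), A.runList q u = some q' →
      ∃ v : List α, v ≠ [] ∧ A.runList q' v = some q) ∧
    (∀ p : Q, 1 < A.layer p → A.μ p = q →
      ∃ u : List α, (A.runList q u).isSome = true ∧ A.runList p u = none)

/-- Inclusion of `x`-safe languages. -/
def SafeLE (A : Layered Q α d) (x : ℕ) (p q : Q) : Prop :=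
  (∀ u : List α, A.SafeFin x p u → A.SafeFin x q u) ∧
  (∀ w : ℕ → α, A.SafeInf x p w → A.SafeInf x q w)

/-- Centralised: siblings (same parent) whose safe languages are included,
lie in the same SCC of their layer. -/
def Centralised (A : Layered Q α d) : Prop :=
  ∀ p q : Q, 2 ≤ A.layer p → A.layer q = A.layer p →
    A.muHat (A.layer p - 1) p = A.muHat (A.layer p - 1) q →
    A.SafeLE (A.layer p) p q →
    (∃ u : List α, A.runList p u = some q) ∧ (∃ v : List α, A.runList q v = some p)

/-- `L(p) = L(q)`: all leaves above (the layer-1 ancestor of) `p` and all leaves above `q`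
recognise the same language in `⟦A⟧`. -/
def LangEq1 (A : Layered Q α d) (p q : Q) : Prop :=
  ∀ l l' : Q, A.IsLeaf l → A.IsLeaf l' → A.muHat 1 l = A.muHat 1 p →
    A.muHat 1 l' = A.muHat 1 q → ∀ w : ℕ → α, (A.SemAccept l w ↔ A.SemAccept l' w)

/-- The equivalence `p ≈_x q`: language equivalence together with equality of all
`y`-safe languages for `2 ≤ y ≤ x`. -/
def ApproxEq (A : Layered Q α d) (x : ℕ) (p q : Q) : Prop :=
  A.LangEq1 p q ∧ ∀ y : ℕ, 2 ≤ y → y ≤ x →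
    ((∀ u : List α, A.SafeFin y p u ↔ A.SafeFin y q u) ∧
     (∀ w : ℕ → α, A.SafeInf y p w ↔ A.SafeInf y q w))

/-- Safe minimality: `≈_x`-equivalent states of the same layer are equal. -/
def SafeMinimal (A : Layered Q α d) : Prop :=
  ∀ p q : Q, A.layer p = A.layer q → A.ApproxEq (A.layer p) p q → p = q

/-- `z` is a central sequence for the state `p` (of layer `x = layer p`). -/
def IsCentralSeq (A : Layered Q α d) (p : Q) (z : List α) : Prop :=
  z ≠ [] ∧ A.runList p z = some p ∧
  (∀ q : Q, A.layer q = A.layer p →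
    A.muHat (A.layer p - 1) q = A.muHat (A.layer p - 1) p →
    (A.runList q z = some p ∨ A.runList q z = none)) ∧
  (∀ q' : Q, A.layer q' = A.layer p + 1 →
    A.muHat (A.layer p - 1) q' = A.muHat (A.layer p - 1) p →
    A.runList q' z = none)

end Layered

/-! ### Morphisms of layered automata -/

/-- A morphism of layered automata. -/
structure IsLayMorphism {Q R α : Type} {d d' : ℕ} (A : Layered Q α d) (B : Layered R α d')
    (φ : Q → R) : Prop where
  map_init : φ A.init = B.init
  map_step : ∀ q a q', A.δ q a = some q' → B.δ (φ q) a = some (φ q')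
  map_anc : ∀ p q, A.IsAncestor p q → B.IsAncestor (φ p) (φ q)

/-- A strong morphism of layered automata additionally preserves non-transitions. -/
def IsStrongLayMorphism {Q R α : Type} {d d' : ℕ} (A : Layered Q α d) (B : Layered R α d')
    (φ : Q → R) : Prop :=
  IsLayMorphism A B φ ∧ ∀ q a, A.δ q a = none → B.δ (φ q) a = none

/-- An isomorphism of layered automata: a bijection on states that restricts to
isomorphisms of the layer transition systems, preserves the initial state, and
commutes with the morphisms `μ`. -/
structure IsLayIso {Q R α : Type} {d d' : ℕ} (A : Layered Q α d) (B : Layered R α d')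
    (φ : Q ≃ R) : Prop where
  map_layer : ∀ q, B.layer (φ q) = A.layer q
  map_init : φ A.init = B.init
  map_mu : ∀ q, φ (A.μ q) = B.μ (φ q)
  map_step : ∀ q a, (A.δ q a).map φ = B.δ (φ q) a

/-- `L(⟦A⟧) = L(⟦B⟧)`: the semantics automata (with any choice of initial leaf states
above the respective initial states) accept the same infinite words. -/
def SemLangEq {Q R α : Type} {d d' : ℕ} (A : Layered Q α d) (B : Layered R α d') : Prop :=
  ∀ (p : Q) (q : R), A.IsLeaf p → A.muHat 1 p = A.init → B.IsLeaf q → B.muHat 1 q = B.init →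
    ∀ w : ℕ → α, (A.SemAccept p w ↔ B.SemAccept q w)

/-! ### Deterministic parity automata -/

/-- A deterministic parity automaton over `α` with priorities in `[1,d]`. -/
structure DPA (Q α : Type) (d : ℕ) where
  init : Q
  next : Q → α → Q
  prio : Q → α → ℕ
  prio_pos : ∀ q a, 1 ≤ prio q a
  prio_le : ∀ q a, prio q a ≤ d

namespace DPA

variable {Q α : Type} {d : ℕ}

/-- The unique run of a DPA on an infinite word. -/
def run (B : DPA Q α d) (w : ℕ → α) : ℕ → Q
  | 0 => B.init
  | n + 1 => B.next (run B w n) (w n)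

/-- Acceptance by a DPA: the priorities along the unique run satisfy parity. -/
def Accepts (B : DPA Q α d) (w : ℕ → α) : Prop :=
  ParityAccept (fun i => B.prio (B.run w i) (w i))

end DPA

/-- `L` is ω-regular: recognised by some deterministic parity automaton. -/
def IsOmegaRegular {α : Type} (L : Set (ℕ → α)) : Prop :=
  ∃ (n d : ℕ) (B : DPA (Fin n) α d), ∀ w : ℕ → α, w ∈ L ↔ B.Accepts w

/-! ### Nondeterministic coBüchi automata -/

/-- A (complete) nondeterministic coBüchi automaton: transitions carry priorities in `{1,2}`. -/
structure NCA (Q α : Type) where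
  init : Q
  trans : Q → α → ℕ → Q → Prop
  prio_mem : ∀ q a x q', trans q a x q' → x = 1 ∨ x = 2
  complete : ∀ q a, ∃ x q', trans q a x q'

namespace NCA

variable {Q α : Type}

/-- Nondeterministic acceptance from the state `q`. -/
def AcceptFrom (B : NCA Q α) (q : Q) (w : ℕ → α) : Prop :=
  ∃ (ρ : ℕ → Q) (pri : ℕ → ℕ), ρ 0 = q ∧
    (∀ i : ℕ, B.trans (ρ i) (w i) (pri i) (ρ (i + 1))) ∧ ParityAccept pri

/-- Semantic determinism: every `a`-successor of `p` recognises `a⁻¹ L(p)`. -/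
def SemDet (B : NCA Q α) : Prop :=
  ∀ p a x q, B.trans p a x q →
    ∀ w : ℕ → α, (B.AcceptFrom q w ↔ B.AcceptFrom p (prependW [a] w))

/-- Safe determinism: all `a`-transitions from a state carry the same priority, and
there is at most one `a`-transition of priority `2` from each state. -/
def SafeDet (B : NCA Q α) : Prop :=
  (∀ q a x q' x' q'', B.trans q a x q' → B.trans q a x' q'' → x = x') ∧
  (∀ q a q' q'', B.trans q a 2 q' → B.trans q a 2 q'' → q' = q'')

/-- 1-saturation: priority-1 transitions go to all language-equivalent states. -/
def OneSaturated (B : NCA Q α) : Prop :=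
  ∀ q a p p', B.trans q a 1 p →
    (∀ w : ℕ → α, (B.AcceptFrom p' w ↔ B.AcceptFrom p w)) → B.trans q a 1 p'

end NCA

/-! ### Simple-by-priorities alternating parity automata (abstract) -/

/-- A simple-by-priorities alternating parity automaton: a complete transition system
over `α × [1,d]` in which all `a`-transitions from a state carry the same priority. -/
structure SPA (Q α : Type) (d : ℕ) where
  init : Q
  step : Q → α → Q → Prop
  prio : Q → α → ℕ
  prio_pos : ∀ q a, 1 ≤ prio q a
  prio_le : ∀ q a, prio q a ≤ d
  complete : ∀ q a, ∃ q', step q a q'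

/-! ### The congruence on tuples of finite words -/

/-- The data of the congruence at one level (tuples of a fixed length,
represented as reversed lists of components: the head is the last component). -/
structure CongrLevel (α : Type) where
  bot : List (List α) → Prop
  eq : List (List α) → List (List α) → Prop
  ptd : List (List α) → Prop

/-- Concatenate a finite word to the last component of a tuple
(tuples are represented as reversed lists: the head is the last component). -/
def tcat {α : Type} (t : List (List α)) (v : List α) : List (List α) :=
  match t with
  | h :: rest => (h ++ v) :: rest
  | [] => []

/-- Merge the last two components of a tuple. -/
def tmerge {α : Type} (t : List (List α)) : List (List α) :=
  match t with
  | u' :: h :: rest => (h ++ u') :: rest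
  | t' => t'

/-- The congruence data at level `n` (handling tuples of length `n+1`), defined by
recursion on the level, following the inductive definition of `≈ ⊥`, `≈` and `pointed`. -/
def congrData {α : Type} [Inhabited α] (L : Set (ℕ → α)) : ℕ → CongrLevel α
  | 0 =>
    { bot := fun _ => False
      eq := fun t s =>
        match t, s with
        | [u], [v] => ∀ w : ℕ → α, (prependW u w ∈ L ↔ prependW v w ∈ L)
        | _, _ => False
      ptd := fun _ => True }
  | n + 1 =>
    let C := congrData L n
    let bot : List (List α) → Prop := fun t =>
      match t with
      | u' :: ubar =>
        C.bot (tmerge (u' :: ubar)) ∨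
        ∀ w : List α, w ≠ [] → C.eq (tcat (tmerge (u' :: ubar)) w) ubar →
          ((prependW ubar.reverse.flatten (perWord (u' ++ w)) ∈ L) ↔ Even (n + 1))
      | [] => True
    let eq : List (List α) → List (List α) → Prop := fun t s =>
      C.eq (tmerge t) (tmerge s) ∧ ∀ v : List α, (bot (tcat t v) ↔ bot (tcat s v))
    let ptd : List (List α) → Prop := fun t =>
      match t with
      | u' :: ubar =>
        ¬ bot (u' :: ubar) ∧ C.ptd ubar ∧
        ∀ (vbar : List (List α)) (v' : List α), vbar.length = n + 1 → C.ptd vbar →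
          C.eq (tcat vbar v') ubar → ¬ bot ((v' ++ u') :: vbar) →
          eq ((v' ++ u') :: vbar) (u' :: ubar)
      | [] => False
    { bot := bot, eq := eq, ptd := ptd }

/-- `t ≈ ⊥` (for a nonempty tuple `t`, in reversed representation). -/
def TupBot {α : Type} [Inhabited α] (L : Set (ℕ → α)) (t : List (List α)) : Prop :=
  (congrData L (t.length - 1)).bot t

/-- `t ≈ s` (for nonempty tuples of the same length, in reversed representation). -/
def TupEq {α : Type} [Inhabited α] (L : Set (ℕ → α)) (t s : List (List α)) : Prop :=
  t.length = s.length ∧ (congrData L (t.length - 1)).eq t s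

/-- `t` is pointed. -/
def TupPointed {α : Type} [Inhabited α] (L : Set (ℕ → α)) (t : List (List α)) : Prop :=
  (congrData L (t.length - 1)).ptd t

/-- `cls` exhibits `A` as (a copy of) the congruence automaton `A_≈` of `L`: its states
are the `≈`-classes of pointed tuples (the layer being the tuple length), transitions
are given by concatenation in the last component, the initial state is the class of
`(ε)`, and the morphisms are given by merging the last two components. -/
structure IsCongrAut {α : Type} [Inhabited α] (L : Set (ℕ → α)) {Q : Type} {d : ℕ}
    (A : Layered Q α d) (cls : (t : List (List α)) → TupPointed L t → Q) : Prop where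
  surj : ∀ q : Q, ∃ (t : List (List α)) (ht : TupPointed L t), cls t ht = q
  cls_eq : ∀ t ht s hs, cls t ht = cls s hs ↔ TupEq L t s
  layer_eq : ∀ t ht, A.layer (cls t ht) = t.length
  init_eq : ∀ h : TupPointed L [([] : List α)], cls [([] : List α)] h = A.init
  step_some : ∀ t ht (a : α) (h' : TupPointed L (tcat t [a])),
    A.δ (cls t ht) a = some (cls (tcat t [a]) h')
  step_none : ∀ t ht (a : α), TupBot L (tcat t [a]) → A.δ (cls t ht) a = none
  mu_eq : ∀ (u' : List α) (ubar : List (List α)) (h : TupPointed L (u' :: ubar))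
    (h' : TupPointed L (tmerge (u' :: ubar))), ubar ≠ [] →
    A.μ (cls (u' :: ubar) h) = cls (tmerge (u' :: ubar)) h'

end
/-! ### Auxiliary development for statement_3 -/

noncomputable section ZOAux
open Layered

section Words

variable {β : Type}

theorem zo_wordDrop_zero (w : ℕ → β) : wordDrop w 0 = w := by
  funext i; simp [wordDrop]

theorem zo_wordDrop_wordDrop (w : ℕ → β) (a b : ℕ) :
    wordDrop (wordDrop w a) b = wordDrop w (a + b) := by
  funext i; simp [wordDrop, Nat.add_assoc]

theorem zo_wordPrefix_zero (w : ℕ → β) : wordPrefix w 0 = [] := rfl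

theorem zo_wordPrefix_succ (w : ℕ → β) (n : ℕ) :
    wordPrefix w (n + 1) = wordPrefix w n ++ [w n] := by
  rw [wordPrefix, wordPrefix, List.ofFn_succ', List.concat_eq_append]
  simp

theorem zo_wordPrefix_length (w : ℕ → β) (n : ℕ) : (wordPrefix w n).length = n := by
  simp [wordPrefix]

theorem zo_wordPrefix_one (w : ℕ → β) : wordPrefix w 1 = [w 0] := rfl

theorem zo_wordPrefix_add (w : ℕ → β) (a b : ℕ) :
    wordPrefix w (a + b) = wordPrefix w a ++ wordPrefix (wordDrop w a) b := by
  induction b with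
  | zero => simp [zo_wordPrefix_zero]
  | succ b ih =>
      rw [← Nat.add_assoc, zo_wordPrefix_succ, ih, zo_wordPrefix_succ, List.append_assoc]
      simp [wordDrop]

end Words

section Auto

variable {Q α : Type} {d : ℕ} (A : Layered Q α d)

theorem zo_layer_iterate (q : Q) : ∀ k, k ≤ A.layer q - 1 →
    A.layer ((A.μ)^[k] q) = A.layer q - k := by
  intro k
  induction k with
  | zero => simp
  | succ k ih =>
      intro hk
      have h1 := A.layer_pos q
      have hk' : k ≤ A.layer q - 1 := by omega
      have h2 := ih hk'
      rw [Function.iterate_succ_apply']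
      have h3 : 1 < A.layer ((A.μ)^[k] q) := by omega
      have := A.μ_layer _ h3
      omega

theorem zo_layer_muHat {x : ℕ} (q : Q) (h1 : 1 ≤ x) (h2 : x ≤ A.layer q) :
    A.layer (A.muHat x q) = x := by
  have := zo_layer_iterate A q (A.layer q - x) (by omega)
  rw [Layered.muHat] at *
  omega

theorem zo_muHat_self {x : ℕ} (q : Q) (h : A.layer q ≤ x) : A.muHat x q = q := by
  have : A.layer q - x = 0 := by omega
  rw [Layered.muHat, this]; rfl

theorem zo_muHat_muHat {x y : ℕ} (q : Q) (h1 : 1 ≤ x) (h2 : x ≤ y) (h3 : y ≤ A.layer q) :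
    A.muHat x (A.muHat y q) = A.muHat x q := by
  have hl2 : A.layer ((A.μ)^[A.layer q - y] q) = A.layer q - (A.layer q - y) :=
    zo_layer_iterate A q (A.layer q - y) (by omega)
  simp only [Layered.muHat]
  rw [hl2, ← Function.iterate_add_apply]
  congr 1
  omega

theorem zo_exists_leaf_above (q : Q) :
    ∃ l, A.IsLeaf l ∧ A.layer q ≤ A.layer l ∧ A.muHat (A.layer q) l = q := by
  suffices h : ∀ n q, d - A.layer q ≤ n →
      ∃ l, A.IsLeaf l ∧ A.layer q ≤ A.layer l ∧ A.muHat (A.layer q) l = q by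
    exact h d q (by omega)
  intro n
  induction n with
  | zero =>
      intro q hq
      by_cases hleaf : A.IsLeaf q
      · exact ⟨q, hleaf, le_refl _, zo_muHat_self A q (le_refl _)⟩
      · exfalso
        simp only [Layered.IsLeaf, not_forall] at hleaf
        obtain ⟨p, hp⟩ := hleaf
        push_neg at hp
        obtain ⟨hp1, hp2⟩ := hp
        have h2 := A.μ_layer p hp1
        have h3 := A.layer_le p
        rw [hp2] at h2
        omega
  | succ n ih =>
      intro q hq
      by_cases hleaf : A.IsLeaf q
      · exact ⟨q, hleaf, le_refl _, zo_muHat_self A q (le_refl _)⟩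
      · simp only [Layered.IsLeaf, not_forall] at hleaf
        obtain ⟨p, hp⟩ := hleaf
        push_neg at hp
        obtain ⟨hp1, hp2⟩ := hp
        have h2 := A.μ_layer p hp1
        rw [hp2] at h2
        obtain ⟨l, hl1, hl2, hl3⟩ := ih p (by omega)
        refine ⟨l, hl1, by omega, ?_⟩
        have h4 : A.muHat (A.layer q) (A.muHat (A.layer p) l) = A.muHat (A.layer q) l :=
          zo_muHat_muHat A l (A.layer_pos q) (by omega) hl2
        rw [hl3] at h4
        rw [← h4]
        have h5 : A.layer p - A.layer q = 1 := by omega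
        rw [Layered.muHat, h5]
        simp [hp2]

theorem zo_delta_iterate (q q' : Q) (a : α) (h : A.δ q a = some q') :
    ∀ k, k ≤ A.layer q - 1 → A.δ ((A.μ)^[k] q) a = some ((A.μ)^[k] q') := by
  intro k
  induction k with
  | zero => simpa
  | succ k ih =>
      intro hk
      have h2 := ih (by omega)
      have h3 : A.layer ((A.μ)^[k] q) = A.layer q - k := zo_layer_iterate A q k (by omega)
      rw [Function.iterate_succ_apply', Function.iterate_succ_apply']
      exact A.μ_morph _ _ _ (by omega) h2

theorem zo_delta_proj {x : ℕ} (q q' : Q) (a : α) (h : A.δ q a = some q')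
    (h1 : 1 ≤ x) (h2 : x ≤ A.layer q) :
    A.δ (A.muHat x q) a = some (A.muHat x q') := by
  have hl := A.δ_layer q a q' h
  have := zo_delta_iterate A q q' a h (A.layer q - x) (by omega)
  rw [Layered.muHat, Layered.muHat, hl]
  exact this

theorem zo_runList_append (q : Q) (u v : List α) :
    A.runList q (u ++ v) = (A.runList q u).bind (fun r => A.runList r v) := by
  induction u generalizing q with
  | nil => simp [Layered.runList]
  | cons a u ih =>
      simp only [List.cons_append, Layered.runList]
      cases h : A.δ q a with
      | none => simp
      | some r => simp [ih r]

theorem zo_runList_singleton (q : Q) (a : α) : A.runList q [a] = A.δ q a := by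
  cases h : A.δ q a with
  | none => simp [Layered.runList, h]
  | some r => simp [Layered.runList, h]

theorem zo_runList_layer (u : List α) : ∀ (q q' : Q), A.runList q u = some q' →
    A.layer q' = A.layer q := by
  induction u with
  | nil => intro q q' h; simp [Layered.runList] at h; rw [h]
  | cons a u ih =>
      intro q q' h
      simp only [Layered.runList] at h
      cases hd : A.δ q a with
      | none => rw [hd] at h; simp at h
      | some r =>
          rw [hd] at h
          rw [ih r q' h, A.δ_layer q a r hd]

theorem zo_runList_proj {x : ℕ} (u : List α) : ∀ (q q' : Q), A.runList q u = some q' →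
    1 ≤ x → x ≤ A.layer q → A.runList (A.muHat x q) u = some (A.muHat x q') := by
  induction u with
  | nil => intro q q' h h1 h2; simp [Layered.runList] at h ⊢; rw [h]
  | cons a u ih =>
      intro q q' h h1 h2
      simp only [Layered.runList] at h ⊢
      cases hd : A.δ q a with
      | none => rw [hd] at h; simp at h
      | some r =>
          rw [hd] at h
          rw [zo_delta_proj A q r a hd h1 h2]
          exact ih r q' h h1 (by rw [A.δ_layer q a r hd]; exact h2)

theorem zo_layer1_run (q : Q) (h : A.layer q = 1) (u : List α) :
    (A.runList q u).isSome = true := by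
  induction u generalizing q with
  | nil => simp [Layered.runList]
  | cons a u ih =>
      simp only [Layered.runList]
      have hc := A.complete1 q a h
      cases hd : A.δ q a with
      | none => rw [hd] at hc; simp at hc
      | some r => exact ih r (by rw [A.δ_layer q a r hd]; exact h)

theorem zo_layerOf_pos (q : Q) (a : α) : 1 ≤ A.layerOf q a := by
  apply Nat.le_findGreatest (P := fun x => (A.δ (A.muHat x q) a).isSome = true) (A.layer_pos q)
  have h1 : A.layer (A.muHat 1 q) = 1 := zo_layer_muHat A q (le_refl _) (A.layer_pos q)
  exact A.complete1 _ a h1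

theorem zo_layerOf_le (q : Q) (a : α) : A.layerOf q a ≤ A.layer q :=
  Nat.findGreatest_le (P := fun x => (A.δ (A.muHat x q) a).isSome = true) _

theorem zo_layerOf_isSome (q : Q) (a : α) :
    (A.δ (A.muHat (A.layerOf q a) q) a).isSome = true := by
  have h1 : A.layer (A.muHat 1 q) = 1 := zo_layer_muHat A q (le_refl _) (A.layer_pos q)
  exact Nat.findGreatest_spec (P := fun x => (A.δ (A.muHat x q) a).isSome = true)
    (A.layer_pos q) (A.complete1 _ a h1)

theorem zo_semPrio_pos (q : Q) (a : α) : 1 ≤ A.semPrio q a := zo_layerOf_pos A q a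

theorem zo_semPrio_le_d (q : Q) (a : α) : A.semPrio q a ≤ d :=
  le_trans (zo_layerOf_le A q a) (A.layer_le q)

theorem zo_semStep_total (q : Q) (a : α) : ∃ q', A.semStep q a q' := by
  have h := zo_layerOf_isSome A q a
  set x := A.layerOf q a with hx
  cases hd : A.δ (A.muHat x q) a with
  | none => rw [hd] at h; simp at h
  | some r =>
      have hx1 : 1 ≤ x := zo_layerOf_pos A q a
      have hx2 : x ≤ A.layer q := zo_layerOf_le A q a
      have hlr : A.layer r = x := by
        rw [A.δ_layer _ a r hd]; exact zo_layer_muHat A q hx1 hx2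
      obtain ⟨l, hl1, hl2, hl3⟩ := zo_exists_leaf_above A r
      refine ⟨l, hl1, ?_⟩
      rw [hd, hlr] at *
      rw [hl3]

theorem zo_semStep_layer_ge (q q' : Q) (a : α) (h : A.semStep q a q') :
    A.layerOf q a ≤ A.layer q' := by
  by_contra hc
  push_neg at hc
  have h2 : A.muHat (A.layerOf q a) q' = q' := zo_muHat_self A q' (le_of_lt hc)
  have h3 := A.δ_layer _ a _ h.2
  rw [h2] at h3
  have hx1 : 1 ≤ A.layerOf q a := zo_layerOf_pos A q a
  have hx2 : A.layerOf q a ≤ A.layer q := zo_layerOf_le A q a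
  rw [zo_layer_muHat A q hx1 hx2] at h3
  omega

theorem zo_semStep_proj {y : ℕ} (q q' : Q) (a : α) (h : A.semStep q a q')
    (h1 : 1 ≤ y) (h2 : y ≤ A.layerOf q a) :
    A.δ (A.muHat y q) a = some (A.muHat y q') := by
  have hx1 : 1 ≤ A.layerOf q a := zo_layerOf_pos A q a
  have hx2 : A.layerOf q a ≤ A.layer q := zo_layerOf_le A q a
  have hly : A.layer (A.muHat (A.layerOf q a) q) = A.layerOf q a :=
    zo_layer_muHat A q hx1 hx2
  have := zo_delta_proj A _ _ a h.2 h1 (by rw [hly]; exact h2)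
  rwa [zo_muHat_muHat A q h1 h2 hx2,
    zo_muHat_muHat A q' h1 h2 (zo_semStep_layer_ge A q q' a h)] at this

end Auto


section MinInf

theorem zo_mio_mem (pi : ℕ → ℕ) (b : ℕ) (hub : ∀ n, pi n ≤ b) :
    ∀ N, ∃ n, N ≤ n ∧ pi n = minInfOften pi := by
  have hne : {x : ℕ | ∀ N : ℕ, ∃ n : ℕ, N ≤ n ∧ pi n = x}.Nonempty := by
    by_contra hc
    rw [Set.not_nonempty_iff_eq_empty] at hc
    have h : ∀ x : ℕ, ∃ N, ∀ n, N ≤ n → pi n ≠ x := by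
      intro x
      have hx : x ∉ {x : ℕ | ∀ N : ℕ, ∃ n : ℕ, N ≤ n ∧ pi n = x} := by rw [hc]; simp
      simp only [Set.mem_setOf_eq, not_forall, not_exists, not_and] at hx
      obtain ⟨N, hN⟩ := hx
      exact ⟨N, hN⟩
    choose f hf using h
    set M := (Finset.range (b + 1)).sup f with hM
    have h1 : f (pi M) ≤ M := Finset.le_sup (Finset.mem_range.2 (Nat.lt_succ_of_le (hub M)))
    exact hf (pi M) M h1 rfl
  have := Nat.sInf_mem hne
  exact this

theorem zo_mio_eventually_le (pi : ℕ → ℕ) :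
    ∃ N, ∀ n, N ≤ n → minInfOften pi ≤ pi n := by
  set L := minInfOften pi with hL
  have h : ∀ y, ∃ N, ∀ n, N ≤ n → y < L → pi n ≠ y := by
    intro y
    by_cases hy : y < L
    · by_cases hmem : y ∈ {x : ℕ | ∀ N : ℕ, ∃ n : ℕ, N ≤ n ∧ pi n = x}
      · exfalso
        have h2 : minInfOften pi ≤ y := Nat.sInf_le hmem
        omega
      · simp only [Set.mem_setOf_eq, not_forall, not_exists, not_and] at hmem
        obtain ⟨N, hN⟩ := hmem
        exact ⟨N, fun n hn _ => hN n hn⟩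
    · exact ⟨0, fun n _ h2 => absurd h2 hy⟩
  choose g hg using h
  refine ⟨(Finset.range L).sup g, fun n hn => ?_⟩
  by_contra hc
  push_neg at hc
  have h1 : g (pi n) ≤ n :=
    le_trans (Finset.le_sup (Finset.mem_range.2 hc)) hn
  exact hg (pi n) n h1 hc rfl

end MinInf

section Safety

variable {Q α : Type} {d : ℕ} (A : Layered Q α d) (w : ℕ → α)

theorem zo_optsome {γ : Type} {o : Option γ} (h : o.isSome = true) (d0 : γ) :
    o = some (o.getD d0) := by
  cases o with
  | none => simp at h
  | some x => rfl

theorem zo_safeInf_muHat_self {x : ℕ} (q : Q) (w' : ℕ → α) (h1 : 1 ≤ x)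
    (h2 : x ≤ A.layer q) :
    A.SafeInf x (A.muHat x q) w' ↔ A.SafeInf x q w' := by
  have h3 : A.layer (A.muHat x q) = x := zo_layer_muHat A q h1 h2
  simp only [Layered.SafeInf, Layered.SafeFin, zo_muHat_self A (A.muHat x q) (le_of_eq h3)]

theorem zo_safe_run {x : ℕ} {s : Q} {N k : ℕ} (hls : A.layer s ≤ x)
    (hsafe : A.SafeInf x s (wordDrop w N)) :
    ∃ s', A.runList s (wordPrefix (wordDrop w N) k) = some s' := by
  have h := hsafe k
  rw [Layered.SafeFin, zo_muHat_self A s hls] at h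
  exact ⟨_, zo_optsome h s⟩

theorem zo_safe_shift {x : ℕ} {s s' : Q} {N k : ℕ} (hls : A.layer s ≤ x)
    (hsafe : A.SafeInf x s (wordDrop w N))
    (hrun : A.runList s (wordPrefix (wordDrop w N) k) = some s') :
    A.SafeInf x s' (wordDrop w (N + k)) := by
  have hls' : A.layer s' ≤ x := by rw [zo_runList_layer A _ s s' hrun]; exact hls
  intro n
  rw [Layered.SafeFin, zo_muHat_self A s' hls']
  have h := hsafe (k + n)
  rw [Layered.SafeFin, zo_muHat_self A s hls] at h
  rw [zo_wordPrefix_add, zo_wordDrop_wordDrop, zo_runList_append, hrun] at h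
  exact h

theorem zo_safe_step {x : ℕ} {s : Q} {N : ℕ} (hls : A.layer s ≤ x)
    (hsafe : A.SafeInf x s (wordDrop w N)) :
    ∃ s', A.δ s (w N) = some s' ∧ A.SafeInf x s' (wordDrop w (N + 1)) := by
  obtain ⟨s', hs'⟩ := zo_safe_run A w (k := 1) hls hsafe
  have h1 : wordPrefix (wordDrop w N) 1 = [w N] := by
    simp [wordPrefix, wordDrop]
  rw [h1, zo_runList_singleton] at hs'
  refine ⟨s', hs', ?_⟩
  have := zo_safe_shift A w (k := 1) hls hsafe (by rw [h1, zo_runList_singleton]; exact hs')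
  exact this

end Safety

section Run

variable {Q α : Type} {d : ℕ} (A : Layered Q α d) (w : ℕ → α) (q0 : Q)

/-- The deterministic layer-1 trajectory. -/
def zoL1 (n : ℕ) : Q := (A.runList (A.muHat 1 q0) (wordPrefix w n)).getD (A.muHat 1 q0)

theorem zoL1_spec (n : ℕ) :
    A.runList (A.muHat 1 q0) (wordPrefix w n) = some (zoL1 A w q0 n) := by
  apply zo_optsome
  exact zo_layer1_run A _ (zo_layer_muHat A q0 (le_refl _) (A.layer_pos q0)) _

theorem zoL1_evol (n k : ℕ) :
    A.runList (zoL1 A w q0 n) (wordPrefix (wordDrop w n) k) = some (zoL1 A w q0 (n + k)) := by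
  have h := zoL1_spec A w q0 (n + k)
  rw [zo_wordPrefix_add, zo_runList_append, zoL1_spec A w q0 n] at h
  exact h

variable (ρ : ℕ → Q)

theorem zo_run_muHat1 (hρ : A.IsSemRun w q0 ρ) (n : ℕ) :
    A.muHat 1 (ρ n) = zoL1 A w q0 n := by
  induction n with
  | zero =>
      rw [hρ.1]
      simp [zoL1, Layered.runList, wordPrefix]
  | succ n ih =>
      have hstep := hρ.2 n
      have h1 : A.δ (A.muHat 1 (ρ n)) (w n) = some (A.muHat 1 (ρ (n + 1))) :=
        zo_semStep_proj A _ _ _ hstep (le_refl _) (zo_layerOf_pos A _ _)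
      have h2 := zoL1_evol A w q0 n 1
      have h3 : wordPrefix (wordDrop w n) 1 = [w n] := by simp [wordPrefix, wordDrop]
      rw [h3, zo_runList_singleton, ← ih] at h2
      rw [h1] at h2
      exact (Option.some_inj.1 h2)

theorem zo_prioProj (hρ : A.IsSemRun w q0 ρ) {x : ℕ} (hx : 1 ≤ x) (N : ℕ) :
    ∀ m, (∀ i, N ≤ i → i < N + m → x ≤ A.semPrio (ρ i) (w i)) → x ≤ A.layer (ρ N) →
    x ≤ A.layer (ρ (N + m)) ∧
      A.runList (A.muHat x (ρ N)) (wordPrefix (wordDrop w N) m) = some (A.muHat x (ρ (N + m))) := by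
  intro m
  induction m with
  | zero => intro _ h2; exact ⟨h2, by simp [Layered.runList, wordPrefix]⟩
  | succ m ih =>
      intro h1 h2
      obtain ⟨ha, hb⟩ := ih (fun i hi hi2 => h1 i hi (by omega)) h2
      have hpm : x ≤ A.semPrio (ρ (N + m)) (w (N + m)) := h1 _ (by omega) (by omega)
      have hstep := hρ.2 (N + m)
      have hproj : A.δ (A.muHat x (ρ (N + m))) (w (N + m)) = some (A.muHat x (ρ (N + m + 1))) :=
        zo_semStep_proj A _ _ _ hstep hx hpm
      have hlay : x ≤ A.layer (ρ (N + m + 1)) :=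
        le_trans hpm (zo_semStep_layer_ge A _ _ _ hstep)
      constructor
      · exact hlay
      · rw [zo_wordPrefix_succ, zo_runList_append, hb]
        have hw : wordDrop w N m = w (N + m) := rfl
        simp only [Option.bind_some, hw, zo_runList_singleton]
        exact hproj

theorem zo_safeInf_of_prios (hρ : A.IsSemRun w q0 ρ) {x : ℕ} (hx : 1 ≤ x) (N : ℕ)
    (h1 : ∀ i, N ≤ i → x ≤ A.semPrio (ρ i) (w i)) :
    x ≤ A.layer (ρ N) ∧ A.SafeInf x (ρ N) (wordDrop w N) := by
  have h2 : x ≤ A.layer (ρ N) :=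
    le_trans (h1 N (le_refl _)) (zo_layerOf_le A _ _)
  refine ⟨h2, fun n => ?_⟩
  have := (zo_prioProj A w q0 ρ hρ hx N n (fun i hi _ => h1 i hi) h2).2
  rw [Layered.SafeFin, this]
  rfl

theorem zo_stay (hρ : A.IsSemRun w q0 ρ) {x : ℕ} (hx : 1 ≤ x) (N : ℕ)
    (h2 : x ≤ A.layer (ρ N)) (hsafe : A.SafeInf x (ρ N) (wordDrop w N)) :
    ∀ m, x ≤ A.layer (ρ (N + m)) ∧ A.SafeInf x (ρ (N + m)) (wordDrop w (N + m)) ∧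
      x ≤ A.semPrio (ρ (N + m)) (w (N + m)) := by
  intro m
  induction m with
  | zero =>
      refine ⟨h2, hsafe, ?_⟩
      · -- priority bound
        have hs : A.SafeInf x (A.muHat x (ρ N)) (wordDrop w N) :=
          (zo_safeInf_muHat_self A (ρ N) _ hx h2).2 hsafe
        obtain ⟨s', hs', _⟩ := zo_safe_step A w
          (le_of_eq (zo_layer_muHat A (ρ N) hx h2)) hs
        apply Nat.le_findGreatest h2
        show (A.δ (A.muHat x (ρ N)) (w N)).isSome = true
        rw [hs']
        rfl
  | succ m ih =>
      obtain ⟨ha, hb, hc⟩ := ih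
      set i := N + m with hi
      have hstep := hρ.2 i
      have hproj : A.δ (A.muHat x (ρ i)) (w i) = some (A.muHat x (ρ (i + 1))) :=
        zo_semStep_proj A _ _ _ hstep hx hc
      have hs : A.SafeInf x (A.muHat x (ρ i)) (wordDrop w i) :=
        (zo_safeInf_muHat_self A (ρ i) _ hx ha).2 hb
      obtain ⟨s', hs', hsafe'⟩ := zo_safe_step A w
        (le_of_eq (zo_layer_muHat A (ρ i) hx ha)) hs
      rw [hproj] at hs'
      have heq : A.muHat x (ρ (i + 1)) = s' := Option.some_inj.1 hs'
      have hlay : x ≤ A.layer (ρ (i + 1)) :=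
        le_trans hc (zo_semStep_layer_ge A _ _ _ hstep)
      have hsafe2 : A.SafeInf x (ρ (i + 1)) (wordDrop w (i + 1)) := by
        rw [← zo_safeInf_muHat_self A (ρ (i + 1)) _ hx hlay, heq]
        exact hsafe'
      have hN : N + (m + 1) = i + 1 := by omega
      rw [hN]
      refine ⟨hlay, hsafe2, ?_⟩
      have hs2 : A.SafeInf x (A.muHat x (ρ (i + 1))) (wordDrop w (i + 1)) :=
        (zo_safeInf_muHat_self A (ρ (i + 1)) _ hx hlay).2 hsafe2
      obtain ⟨s2, hs2', _⟩ := zo_safe_step A w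
        (le_of_eq (zo_layer_muHat A (ρ (i + 1)) hx hlay)) hs2
      apply Nat.le_findGreatest hlay
      rw [hs2']
      rfl

end Run

section Trap

variable {Q α : Type} {d : ℕ} (A : Layered Q α d) (w : ℕ → α) (q0 : Q)

theorem zo_muHat_pred {x : ℕ} (p : Q) (h : A.layer p = x + 1) : A.muHat x p = A.μ p := by
  rw [Layered.muHat, h]
  simp

/-- An upgrade opportunity at time `n` in state `q`. -/
def zoTakn (n : ℕ) (q q' : Q) : Prop :=
  A.semPrio q (w n) + 1 ≤ A.layer q' ∧
    A.SafeInf (A.semPrio q (w n) + 1) q' (wordDrop w (n + 1))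

def zoOpp (n : ℕ) (q : Q) : Prop := ∃ q', A.semStep q (w n) q' ∧ zoTakn A w n q q'

def zoGoodTrap (n : ℕ) (t : Q) : Prop :=
  A.muHat 1 t = zoL1 A w q0 n ∧ A.SafeInf (A.layer t) t (wordDrop w n) ∧
  ∀ n' p', A.layer p' = A.layer t + 1 →
    A.runList t (wordPrefix (wordDrop w n) n') = some (A.μ p') →
    ¬ A.SafeInf (A.layer p') p' (wordDrop w (n + n'))

def zoET : Prop := ∃ n t, Even (A.layer t) ∧ zoGoodTrap A w q0 n t

def zoOT : Prop := ∃ n t, Odd (A.layer t) ∧ zoGoodTrap A w q0 n t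

variable (ρ : ℕ → Q)

theorem zo_takn_stay (hρ : A.IsSemRun w q0 ρ) (n : ℕ)
    (h : zoTakn A w n (ρ n) (ρ (n + 1))) :
    ∀ m, n + 1 ≤ m → A.semPrio (ρ n) (w n) + 1 ≤ A.semPrio (ρ m) (w m) := by
  intro m hm
  have := (zo_stay A w q0 ρ hρ (x := A.semPrio (ρ n) (w n) + 1) (by omega) (n + 1)
    h.1 h.2 (m - (n + 1))).2.2
  have harith : n + 1 + (m - (n + 1)) = m := by omega
  rwa [harith] at this

theorem zo_finSucc (hρ : A.IsSemRun w q0 ρ)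
    (h : ∀ n0, ∃ n, n0 ≤ n ∧ zoTakn A w n (ρ n) (ρ (n + 1))) : False := by
  have key : ∀ k, ∃ N, ∀ m, N ≤ m → k + 1 ≤ A.semPrio (ρ m) (w m) := by
    intro k
    induction k with
    | zero => exact ⟨0, fun m _ => zo_semPrio_pos A _ _⟩
    | succ k ih =>
        obtain ⟨N, hN⟩ := ih
        obtain ⟨n, hn1, hn2⟩ := h N
        refine ⟨n + 1, fun m hm => ?_⟩
        have h1 := zo_takn_stay A w q0 ρ hρ n hn2 m hm
        have h2 := hN n hn1
        omega
  obtain ⟨N, hN⟩ := key d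
  have := hN N (le_refl _)
  have := zo_semPrio_le_d A (ρ N) (w N)
  omega

theorem zo_trap (hρ : A.IsSemRun w q0 ρ) {L N1 : ℕ} (hL : 1 ≤ L)
    (hN1 : ∀ n, N1 ≤ n → L ≤ A.semPrio (ρ n) (w n))
    (hio : ∀ N, ∃ n, N ≤ n ∧ A.semPrio (ρ n) (w n) = L)
    (hnoopp : ∀ n, N1 ≤ n → A.semPrio (ρ n) (w n) = L → ¬ zoOpp A w n (ρ n)) :
    A.layer (A.muHat L (ρ N1)) = L ∧ zoGoodTrap A w q0 N1 (A.muHat L (ρ N1)) := by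
  have hlay : L ≤ A.layer (ρ N1) := le_trans (hN1 N1 (le_refl _)) (zo_layerOf_le A _ _)
  have hlt : A.layer (A.muHat L (ρ N1)) = L := zo_layer_muHat A _ hL hlay
  refine ⟨hlt, ?_, ?_, ?_⟩
  · -- muHat 1
    rw [zo_muHat_muHat A (ρ N1) (le_refl 1) hL hlay]
    exact zo_run_muHat1 A w q0 ρ hρ N1
  · -- SafeInf
    rw [hlt]
    have := (zo_safeInf_of_prios A w q0 ρ hρ hL N1 (fun i hi => hN1 i hi)).2
    exact (zo_safeInf_muHat_self A (ρ N1) _ hL hlay).2 this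
  · -- no escape
    intro n' p' hlp' hrun hsafe'
    rw [hlt] at hlp'
    obtain ⟨n'', hn''1, hn''2⟩ := hio (N1 + n')
    set m := n'' - (N1 + n') with hm
    have harith : N1 + n' + m = n'' := by omega
    -- the walk's layer-L state at time N1 + n'
    have hproj1 := (zo_prioProj A w q0 ρ hρ hL N1 n'
      (fun i hi _ => hN1 i hi) hlay).2
    have hmu : A.μ p' = A.muHat L (ρ (N1 + n')) := by
      rw [hrun] at hproj1
      exact Option.some_inj.1 hproj1
    -- run the (L+1)-safe state forward to time n''
    have hlp'le : A.layer p' ≤ L + 1 := le_of_eq hlp'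
    rw [hlp'] at hsafe'
    obtain ⟨p'', hp''⟩ := zo_safe_run A w (k := m) hlp'le hsafe'
    have hlp'' : A.layer p'' = L + 1 := by
      rw [zo_runList_layer A _ _ _ hp'', hlp']
    have hsafe'' : A.SafeInf (L + 1) p'' (wordDrop w n'') := by
      have := zo_safe_shift A w hlp'le hsafe' hp''
      rwa [harith] at this
    -- its parent tracks the walk
    have hlayn' : L ≤ A.layer (ρ (N1 + n')) :=
      le_trans (hN1 _ (by omega)) (zo_layerOf_le A _ _)
    have hproj2 := (zo_prioProj A w q0 ρ hρ hL (N1 + n') m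
      (fun i hi _ => hN1 i (by omega)) hlayn').2
    rw [harith] at hproj2
    have hp''proj : A.runList (A.muHat L p') (wordPrefix (wordDrop w (N1 + n')) m)
        = some (A.muHat L p'') :=
      zo_runList_proj A _ _ _ hp'' hL (by omega)
    rw [zo_muHat_pred A p' hlp', hmu, hproj2] at hp''proj
    have hmu'' : A.muHat L p'' = A.μ p'' := zo_muHat_pred A p'' hlp''
    rw [hmu''] at hp''proj
    have hμp'' : A.μ p'' = A.muHat L (ρ n'') := Option.some_inj.1 hp''proj.symm
    -- one more step of the safe state
    obtain ⟨p3, hp3, hp3safe⟩ := zo_safe_step A w (le_of_eq hlp'') hsafe''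
    have hlp3 : A.layer p3 = L + 1 := by rw [A.δ_layer _ _ _ hp3, hlp'']
    -- a leaf above p3
    obtain ⟨l, hl1, hl2, hl3⟩ := zo_exists_leaf_above A p3
    rw [hlp3] at hl2 hl3
    -- the semStep to l
    have hstep : A.semStep (ρ n'') (w n'') l := by
      refine ⟨hl1, ?_⟩
      have hx : A.layerOf (ρ n'') (w n'') = L := hn''2
      rw [hx]
      have h1 : A.δ (A.μ p'') (w n'') = some (A.μ p3) :=
        A.μ_morph _ _ _ (by omega) hp3
      have h2 : A.muHat L l = A.μ p3 := by
        rw [← zo_muHat_muHat A l hL (by omega) hl2, hl3, zo_muHat_pred A p3 hlp3]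
      rw [← hμp'']
      rw [h2]
      exact h1
    have htakn : zoTakn A w n'' (ρ n'') l := by
      constructor
      · rw [hn''2]; omega
      · rw [hn''2]
        rw [← zo_safeInf_muHat_self A l _ (by omega) hl2, hl3]
        exact hp3safe
    exact hnoopp n'' (by omega) hn''2 ⟨l, hstep, htakn⟩

theorem zo_push (n m : ℕ) (t : Q) (h : zoGoodTrap A w q0 n t) :
    ∃ t', A.layer t' = A.layer t ∧ zoGoodTrap A w q0 (n + m) t' := by
  obtain ⟨t', ht'⟩ := zo_safe_run A w (k := m) (le_refl (A.layer t)) h.2.1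
  have hlt' : A.layer t' = A.layer t := zo_runList_layer A _ _ _ ht'
  refine ⟨t', hlt', ?_, ?_, ?_⟩
  · -- muHat 1
    have hproj : A.runList (A.muHat 1 t) (wordPrefix (wordDrop w n) m)
        = some (A.muHat 1 t') :=
      zo_runList_proj A _ _ _ ht' (le_refl _) (A.layer_pos t)
    rw [h.1] at hproj
    rw [zoL1_evol A w q0 n m] at hproj
    exact (Option.some_inj.1 hproj).symm
  · rw [hlt']
    exact zo_safe_shift A w (le_refl _) h.2.1 ht'
  · intro n' p' hl hr hs
    have harith : n + (m + n') = n + m + n' := by omega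
    refine h.2.2 (m + n') p' (by rw [hl, hlt']) ?_ ?_
    · rw [zo_wordPrefix_add, zo_wordDrop_wordDrop, zo_runList_append, ht']
      exact hr
    · rwa [harith]

theorem zo_gt_acc (n : ℕ) (t : Q) (h : zoGoodTrap A w q0 n t) (he : Even (A.layer t)) :
    A.StronglyAcc t (wordDrop w n) := by
  refine ⟨he, h.2.1, fun n' p' h1 h2 => ?_⟩
  rw [zo_wordDrop_wordDrop]
  exact h.2.2 n' p' h1 h2

theorem zo_gt_rej (n : ℕ) (t : Q) (h : zoGoodTrap A w q0 n t) (he : Odd (A.layer t)) :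
    A.StronglyRej t (wordDrop w n) := by
  refine ⟨he, h.2.1, fun n' p' h1 h2 => ?_⟩
  rw [zo_wordDrop_wordDrop]
  exact h.2.2 n' p' h1 h2

theorem zo_not_both (hcons : A.Consistent) : ¬ (zoET A w q0 ∧ zoOT A w q0) := by
  rintro ⟨⟨n1, t1, he1, hg1⟩, ⟨n2, t2, ho2, hg2⟩⟩
  obtain ⟨t1', hl1, hg1'⟩ := zo_push A w q0 n1 (max n1 n2 - n1) t1 hg1
  obtain ⟨t2', hl2, hg2'⟩ := zo_push A w q0 n2 (max n1 n2 - n2) t2 hg2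
  have e1 : n1 + (max n1 n2 - n1) = max n1 n2 := by omega
  have e2 : n2 + (max n1 n2 - n2) = max n1 n2 := by omega
  rw [e1] at hg1'
  rw [e2] at hg2'
  apply hcons
  refine ⟨t1', t2', wordDrop w (max n1 n2), ?_, ?_, ?_⟩
  · rw [hg1'.1, hg2'.1]
  · exact zo_gt_acc A w q0 _ _ hg1' (by rw [hl1]; exact he1)
  · exact zo_gt_rej A w q0 _ _ hg2' (by rw [hl2]; exact ho2)

end Trap

section Greedy

variable {Q α : Type} {d : ℕ} (A : Layered Q α d) (w : ℕ → α) (q0 : Q)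

def zoGreedy : List (Q × α) → Q → α → Q := fun h q a =>
  if hx : ∃ q', A.semStep q a q' ∧ A.semPrio q a + 1 ≤ A.layer q' ∧
      A.SafeInf (A.semPrio q a + 1) q' (wordDrop w (h.length + 1)) then hx.choose
  else (zo_semStep_total A q a).choose

theorem zoGreedy_step (h : List (Q × α)) (q : Q) (a : α) :
    A.semStep q a (zoGreedy A w h q a) := by
  rw [zoGreedy]
  split_ifs with hx
  · exact hx.choose_spec.1
  · exact (zo_semStep_total A q a).choose_spec

theorem zoGreedy_takes (h : List (Q × α)) (q : Q) (n : ℕ) (hlen : h.length = n)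
    (hopp : zoOpp A w n q) :
    zoTakn A w n q (zoGreedy A w h q (w n)) := by
  subst hlen
  rw [zoGreedy]
  have hx : ∃ q', A.semStep q (w h.length) q' ∧ A.semPrio q (w h.length) + 1 ≤ A.layer q' ∧
      A.SafeInf (A.semPrio q (w h.length) + 1) q' (wordDrop w (h.length + 1)) := by
    obtain ⟨q', h1, h2, h3⟩ := hopp
    exact ⟨q', h1, h2, h3⟩
  rw [dif_pos hx]
  exact ⟨hx.choose_spec.2.1, hx.choose_spec.2.2⟩

variable (ρ : ℕ → Q)

theorem zo_run_trap (hρ : A.IsSemRun w q0 ρ)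
    (hgre : ∀ n, A.semPrio (ρ n) (w n) = minInfOften (A.runPrios w ρ) →
      zoOpp A w n (ρ n) → zoTakn A w n (ρ n) (ρ (n + 1))) :
    ∃ n t, A.layer t = minInfOften (A.runPrios w ρ) ∧ zoGoodTrap A w q0 n t := by
  set L := minInfOften (A.runPrios w ρ) with hLdef
  have hub : ∀ n, A.runPrios w ρ n ≤ d := fun n => zo_semPrio_le_d A _ _
  have hios : ∀ N, ∃ n, N ≤ n ∧ A.semPrio (ρ n) (w n) = L :=
    zo_mio_mem (A.runPrios w ρ) d hub
  have hL1 : 1 ≤ L := by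
    obtain ⟨n, _, hn⟩ := hios 0
    rw [← hn]
    exact zo_semPrio_pos A _ _
  obtain ⟨N0, hN0⟩ := zo_mio_eventually_le (A.runPrios w ρ)
  have hnoopp : ∀ n, N0 ≤ n → A.semPrio (ρ n) (w n) = L → ¬ zoOpp A w n (ρ n) := by
    intro n hn hpr hopp
    have htakn := hgre n hpr hopp
    obtain ⟨n2, hn2a, hn2b⟩ := hios (n + 1)
    have := zo_takn_stay A w q0 ρ hρ n htakn n2 hn2a
    rw [hpr, hn2b] at this
    omega
  obtain ⟨hl, hgt⟩ := zo_trap A w q0 ρ hρ hL1 hN0 hios hnoopp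
  exact ⟨N0, _, hl, hgt⟩

theorem zo_G1 (hOT : ¬ zoOT A w q0) : A.SemAccept q0 w := by
  refine ⟨zoGreedy A w, fun h q a _ => zoGreedy_step A w h q a, ?_⟩
  intro ρ hρ hce
  rw [ParityAccept]
  by_contra heven
  have hodd : Odd (minInfOften (A.runPrios w ρ)) := Nat.not_even_iff_odd.1 heven
  have hgre : ∀ n, A.semPrio (ρ n) (w n) = minInfOften (A.runPrios w ρ) →
      zoOpp A w n (ρ n) → zoTakn A w n (ρ n) (ρ (n + 1)) := by
    intro n hpr hopp
    have ho : Odd (A.semPrio (ρ n) (w n)) := by rw [hpr]; exact hodd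
    have hhist := hce n ho
    rw [hhist]
    exact zoGreedy_takes A w _ _ n (by simp) hopp
  obtain ⟨n, t, hlt, hgt⟩ := zo_run_trap A w q0 ρ hρ hgre
  exact hOT ⟨n, t, by rw [hlt]; exact hodd, hgt⟩

def zoPlay (σ : List (Q × α) → Q → α → Q) : ℕ → Q × List (Q × α)
  | 0 => (q0, [])
  | n + 1 =>
      let p := zoPlay σ n
      (if Odd (A.semPrio p.1 (w n)) then σ p.2 p.1 (w n) else zoGreedy A w p.2 p.1 (w n),
       p.2 ++ [(p.1, w n)])

theorem zoPlay_hist (σ : List (Q × α) → Q → α → Q) (n : ℕ) :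
    (zoPlay A w q0 σ n).2 = List.ofFn (fun j : Fin n => ((zoPlay A w q0 σ (j : ℕ)).1, w (j : ℕ))) := by
  induction n with
  | zero => simp [zoPlay]
  | succ n ih =>
      rw [List.ofFn_succ', List.concat_eq_append]
      show (zoPlay A w q0 σ n).2 ++ [((zoPlay A w q0 σ n).1, w n)] = _
      rw [ih]
      rfl

theorem zo_G2 (hET : ¬ zoET A w q0) : ¬ A.SemAccept q0 w := by
  rintro ⟨σ, hσ, hwin⟩
  set ρ : ℕ → Q := fun n => (zoPlay A w q0 σ n).1 with hρdef
  have hstep : ∀ n, ρ (n + 1) =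
      (if Odd (A.semPrio (ρ n) (w n)) then σ (zoPlay A w q0 σ n).2 (ρ n) (w n)
        else zoGreedy A w (zoPlay A w q0 σ n).2 (ρ n) (w n)) := by
    intro n; rfl
  have hρ : A.IsSemRun w q0 ρ := by
    refine ⟨rfl, fun i => ?_⟩
    rw [hstep i]
    split_ifs with h
    · exact hσ _ _ _ h
    · exact zoGreedy_step A w _ _ _
  have hce : A.ConsEve σ w ρ := by
    intro i hodd
    rw [hstep i, if_pos hodd, zoPlay_hist]
  have hpar := hwin ρ hρ hce
  rw [ParityAccept] at hpar
  have hgre : ∀ n, A.semPrio (ρ n) (w n) = minInfOften (A.runPrios w ρ) →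
      zoOpp A w n (ρ n) → zoTakn A w n (ρ n) (ρ (n + 1)) := by
    intro n hpr hopp
    have hnotodd : ¬ Odd (A.semPrio (ρ n) (w n)) := by
      rw [hpr, ← Nat.not_even_iff_odd]
      simp [hpar]
    rw [hstep n, if_neg hnotodd]
    apply zoGreedy_takes A w _ _ n _ hopp
    rw [zoPlay_hist]
    simp
  obtain ⟨n, t, hlt, hgt⟩ := zo_run_trap A w q0 ρ hρ hgre
  exact hET ⟨n, t, by rw [hlt]; exact hpar, hgt⟩

end Greedy

section Meas
open MeasureTheory

variable {Q α : Type} [Fintype Q] [MeasurableSpace Q] {d : ℕ}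
variable (A : Layered Q α d) (w : ℕ → α) (q0 : Q)

/-- Mass of a finite pattern of states starting at `p` at time `j`. -/
def zoMass : ℕ → Q → List Q → ENNReal
  | _, _, [] => 1
  | j, p, q :: l => A.stepProb p (w j) q * zoMass (j + 1) q l

/-- Cylinder on coordinates `0..l.length` with values `p :: l`. -/
def zoCyl (p : Q) (l : List Q) : Set (ℕ → Q) :=
  {ρ | ∀ i : Fin (l.length + 1), ρ (i : ℕ) = (p :: l).getD (i : ℕ) p}

theorem zoMass_prod (l : List Q) : ∀ (p d0 : Q) (j : ℕ),
    (∏ i : Fin l.length, A.stepProb ((p :: l).getD (i : ℕ) d0) (w (j + (i : ℕ)))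
      ((p :: l).getD ((i : ℕ) + 1) d0)) = zoMass A w j p l := by
  induction l with
  | nil => intro p d0 j; simp [zoMass]
  | cons q l ih =>
      intro p d0 j
      rw [show ((q :: l).length) = l.length + 1 from rfl, Fin.prod_univ_succ, zoMass,
        ← ih q d0 (j + 1)]
      congr 1
      apply Finset.prod_congr rfl
      intro i _
      show A.stepProb ((p :: q :: l).getD ((i : ℕ) + 1) d0) (w (j + ((i : ℕ) + 1)))
          ((p :: q :: l).getD ((i : ℕ) + 1 + 1) d0)
        = A.stepProb ((q :: l).getD (i : ℕ) d0) (w (j + 1 + (i : ℕ)))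
          ((q :: l).getD ((i : ℕ) + 1) d0)
      rw [List.getD_cons_succ, List.getD_cons_succ,
        show j + ((i : ℕ) + 1) = j + 1 + (i : ℕ) from by omega]

theorem zo_mCyl (m : MeasureTheory.Measure (ℕ → Q)) (hm : A.IsWalkMeasure w q0 m)
    (p : Q) (l : List Q) :
    m (zoCyl p l) = (if p = q0 then 1 else 0) * zoMass A w 0 p l := by
  have h := hm.2 l.length (fun i => (p :: l).getD (i : ℕ) p)
  have hset : {ρ : ℕ → Q | ∀ i : Fin (l.length + 1), ρ (i : ℕ) = (p :: l).getD (i : ℕ) p}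
      = zoCyl p l := rfl
  rw [hset] at h
  beta_reduce at h
  have hprod : (∏ i : Fin l.length, A.stepProb ((p :: l).getD ((i.castSucc : ℕ)) p)
      (w (i : ℕ)) ((p :: l).getD ((i.succ : ℕ)) p)) = zoMass A w 0 p l := by
    rw [← zoMass_prod A w l p p 0]
    apply Finset.prod_congr rfl
    intro i _
    simp only [Fin.coe_castSucc, Fin.val_succ, Nat.zero_add]
  rw [hprod] at h
  exact h

theorem zo_cover (m : MeasureTheory.Measure (ℕ → Q)) (hm : A.IsWalkMeasure w q0 m)
    (S : Set (ℕ → Q)) (P : List Q → Prop)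
    (hS : ∀ ρ ∈ S, ∃ l, P l ∧ ρ ∈ zoCyl q0 l) :
    m S ≤ ∑' l : {l : List Q // P l}, zoMass A w 0 q0 (l : List Q) := by
  have hsub : S ⊆ ⋃ l : {l : List Q // P l}, zoCyl q0 (l : List Q) := by
    intro ρ hρ
    obtain ⟨l, hP, hmem⟩ := hS ρ hρ
    exact Set.mem_iUnion.2 ⟨⟨l, hP⟩, hmem⟩
  calc m S ≤ m (⋃ l : {l : List Q // P l}, zoCyl q0 (l : List Q)) := measure_mono hsub
    _ ≤ ∑' l : {l : List Q // P l}, m (zoCyl q0 (l : List Q)) := measure_iUnion_le _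
    _ = ∑' l : {l : List Q // P l}, zoMass A w 0 q0 (l : List Q) := by
        apply tsum_congr
        intro l
        rw [zo_mCyl A w q0 m hm, if_pos rfl, one_mul]

theorem zoMass_zero (l : List Q) : ∀ (p d0 : Q) (j i : ℕ), i < l.length →
    ¬ A.semStep ((p :: l).getD i d0) (w (j + i)) ((p :: l).getD (i + 1) d0) →
    zoMass A w j p l = 0 := by
  induction l with
  | nil => intro p d0 j i hi; simp at hi
  | cons q l ih =>
      intro p d0 j i hi hstep
      rw [zoMass]
      cases i with
      | zero =>
          have hstep' : ¬ A.semStep p (w j) q := by simpa using hstep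
          have : A.stepProb p (w j) q = 0 := by rw [Layered.stepProb, if_neg hstep']
          rw [this, zero_mul]
      | succ i =>
          have : zoMass A w (j + 1) q l = 0 := by
            apply ih q d0 (j + 1) i (by simpa using hi)
            have e3 : j + 1 + i = j + (i + 1) := by omega
            rw [e3]
            simpa [List.getD_cons_succ] using hstep
          rw [this, mul_zero]

/-- The pattern of a sequence. -/
def zoPat (ρ : ℕ → Q) (k : ℕ) : List Q := List.ofFn (fun i : Fin k => ρ ((i : ℕ) + 1))

theorem zoPat_getD (ρ : ℕ → Q) (k : ℕ) (d0 : Q) (hρ0 : ρ 0 = d0) :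
    ∀ i, i ≤ k → (d0 :: zoPat ρ k).getD i d0 = ρ i := by
  intro i hi
  cases i with
  | zero => simp [hρ0]
  | succ i =>
      rw [List.getD_cons_succ]
      rw [List.getD_eq_getElem _ _ (by simp [zoPat]; omega)]
      simp [zoPat]

theorem zo_mem_cyl (ρ : ℕ → Q) (k : ℕ) (hρ0 : ρ 0 = q0) : ρ ∈ zoCyl q0 (zoPat ρ k) := by
  intro i
  have hlen : (zoPat ρ k).length = k := by simp [zoPat]
  rw [zoPat_getD ρ k q0 hρ0 (i : ℕ) (by have := i.2; omega)]

theorem zo_nonruns_null (m : MeasureTheory.Measure (ℕ → Q)) (hm : A.IsWalkMeasure w q0 m) :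
    m {ρ : ℕ → Q | ¬ A.IsSemRun w q0 ρ} = 0 := by
  have hsub : {ρ : ℕ → Q | ¬ A.IsSemRun w q0 ρ} ⊆
      {ρ : ℕ → Q | ρ 0 ≠ q0} ∪ {ρ : ℕ → Q | ρ 0 = q0 ∧ ∃ n, ¬ A.semStep (ρ n) (w n) (ρ (n + 1))} := by
    intro ρ hρ
    simp only [Layered.IsSemRun, not_and_or, not_forall] at hρ
    by_cases h0 : ρ 0 = q0
    · right
      refine ⟨h0, ?_⟩
      rcases hρ with h | h
      · exact absurd h0 h
      · exact h
    · left; exact h0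
  apply le_antisymm _ (zero_le)
  calc m {ρ : ℕ → Q | ¬ A.IsSemRun w q0 ρ} ≤ _ := measure_mono hsub
    _ ≤ m {ρ : ℕ → Q | ρ 0 ≠ q0} +
        m {ρ : ℕ → Q | ρ 0 = q0 ∧ ∃ n, ¬ A.semStep (ρ n) (w n) (ρ (n + 1))} := measure_union_le _ _
    _ ≤ 0 + 0 := by
        gcongr
        · -- first part
          have hcov : ∀ ρ ∈ {ρ : ℕ → Q | ρ 0 ≠ q0}, ∃ p : Q, p ≠ q0 ∧ ρ ∈ zoCyl p [] := by
            intro ρ hρ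
            refine ⟨ρ 0, hρ, ?_⟩
            intro i
            have hi : (i : ℕ) = 0 := by
              have := i.2
              simp only [List.length_nil] at this
              omega
            simp [hi]
          have hsub2 : {ρ : ℕ → Q | ρ 0 ≠ q0} ⊆ ⋃ p : {p : Q // p ≠ q0}, zoCyl (p : Q) [] := by
            intro ρ hρ
            obtain ⟨p, h1, h2⟩ := hcov ρ hρ
            exact Set.mem_iUnion.2 ⟨⟨p, h1⟩, h2⟩
          calc m {ρ : ℕ → Q | ρ 0 ≠ q0} ≤ m (⋃ p : {p : Q // p ≠ q0}, zoCyl (p : Q) []) :=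
                measure_mono hsub2
            _ ≤ ∑' p : {p : Q // p ≠ q0}, m (zoCyl (p : Q) []) := measure_iUnion_le _
            _ = 0 := by
                have hz : ∀ p : {p : Q // p ≠ q0}, m (zoCyl (p : Q) ([] : List Q)) = 0 := by
                  intro p
                  rw [zo_mCyl A w q0 m hm, if_neg p.2, zero_mul]
                rw [tsum_congr hz]
                exact tsum_zero
        · -- second part
          calc m {ρ : ℕ → Q | ρ 0 = q0 ∧ ∃ n, ¬ A.semStep (ρ n) (w n) (ρ (n + 1))}
              ≤ ∑' l : {l : List Q // ∃ i, i + 1 < (q0 :: l).length ∧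
                  ¬ A.semStep ((q0 :: l).getD i q0) (w i) ((q0 :: l).getD (i + 1) q0)},
                zoMass A w 0 q0 (l : List Q) := by
                apply zo_cover A w q0 m hm
                intro ρ hρ
                obtain ⟨h0, n, hn⟩ := hρ
                refine ⟨zoPat ρ (n + 1), ⟨n, ?_, ?_⟩, zo_mem_cyl q0 ρ (n + 1) h0⟩
                · simp [zoPat]
                · rw [zoPat_getD ρ (n + 1) q0 h0 n (by omega),
                    zoPat_getD ρ (n + 1) q0 h0 (n + 1) (by omega)]
                  exact hn
            _ = 0 := by
                have hz : ∀ l : {l : List Q // ∃ i, i + 1 < (q0 :: l).length ∧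
                    ¬ A.semStep ((q0 :: l).getD i q0) (w i) ((q0 :: l).getD (i + 1) q0)},
                    zoMass A w 0 q0 (l : List Q) = 0 := by
                  intro l
                  obtain ⟨i, hi1, hi2⟩ := l.2
                  exact zoMass_zero A w (l : List Q) q0 q0 0 i (by simpa using hi1)
                    (by simpa using hi2)
                rw [tsum_congr hz]
                exact tsum_zero
    _ = 0 := by simp

end Meas

section Prob
open MeasureTheory Function

variable {Q α : Type} [Fintype Q] [MeasurableSpace Q] {d : ℕ}
variable (A : Layered Q α d) (w : ℕ → α) (q0 : Q)

def zoEps (Q : Type) [Fintype Q] : ENNReal := ((Fintype.card Q : ℕ) : ENNReal)⁻¹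

/-- Pattern predicate: starting at time `j` in state `p`, skip `t` steps, then all
opportunities fail, there are exactly `k` of them, and the last step is the `k`-th. -/
def zoPatOK : ℕ → Q → ℕ → ℕ → List Q → Prop
  | _, _, _, _, [] => False
  | j, _, t + 1, k, q :: l => zoPatOK (j + 1) q t k l
  | j, p, 0, k, [q] => zoOpp A w j p ∧ ¬ zoTakn A w j p q ∧ k = 1
  | j, p, 0, k, q :: q' :: l =>
      (zoOpp A w j p ∧ ¬ zoTakn A w j p q ∧ 2 ≤ k ∧ zoPatOK (j + 1) q 0 (k - 1) (q' :: l)) ∨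
      (¬ zoOpp A w j p ∧ zoPatOK (j + 1) q 0 k (q' :: l))

theorem zo_ite_le {c1 c2 : Prop} [Decidable c1] [Decidable c2] (h : c1 → c2) (x : ENNReal) :
    (if c1 then x else 0) ≤ if c2 then x else 0 := by
  by_cases h1 : c1
  · rw [if_pos h1, if_pos (h h1)]
  · rw [if_neg h1]
    exact zero_le

theorem zo_ite_congr {c1 c2 : Prop} [Decidable c1] [Decidable c2] (h : c1 ↔ c2) (x : ENNReal) :
    (if c1 then x else 0) = if c2 then x else 0 := by
  by_cases h1 : c1
  · rw [if_pos h1, if_pos (h.1 h1)]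
  · rw [if_neg h1, if_neg (fun hc => h1 (h.2 hc))]

theorem zo_tsum_cons (F : List Q → ENNReal) (hnil : F [] = 0) :
    ∑' l : List Q, F l = ∑ q : Q, ∑' l : List Q, F (q :: l) := by
  have hinj : Function.Injective (fun ql : Q × List Q => ql.1 :: ql.2) := by
    rintro ⟨a, l⟩ ⟨b, l2⟩ h
    simp only [List.cons.injEq] at h
    exact Prod.ext h.1 h.2
  have hsupp : Function.support F ⊆ Set.range (fun ql : Q × List Q => ql.1 :: ql.2) := by
    intro l hl
    cases l with
    | nil => exact absurd hnil hl
    | cons q l => exact ⟨(q, l), rfl⟩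
  rw [← hinj.tsum_eq hsupp, ENNReal.tsum_prod', tsum_fintype]

theorem zo_tsum_subtype_le (P : List Q → Prop) (f : List Q → ENNReal) :
    ∑' l : {l : List Q // P l}, f (l : List Q) ≤ ∑' l : List Q, if P l then f l else 0 := by
  have hinj : Function.Injective (Subtype.val : {l : List Q // P l} → List Q) :=
    Subtype.val_injective
  have hsupp : Function.support (fun l => if P l then f l else 0) ⊆
      Set.range (Subtype.val : {l : List Q // P l} → List Q) := by
    intro l hl
    by_cases hP : P l
    · exact ⟨⟨l, hP⟩, rfl⟩
    · simp [hP] at hl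
  rw [← hinj.tsum_eq hsupp]
  apply le_of_eq
  apply tsum_congr
  intro x
  rw [if_pos x.2]

theorem zo_tsum_trunc (P : List Q → Prop) (f : List Q → ENNReal) (C : ENNReal)
    (hM : ∀ M : ℕ, (∑' l : List Q, if P l ∧ l.length ≤ M then f l else 0) ≤ C) :
    (∑' l : List Q, if P l then f l else 0) ≤ C := by
  rw [ENNReal.tsum_eq_iSup_sum]
  apply iSup_le
  intro s
  calc ∑ l ∈ s, (if P l then f l else 0)
      ≤ ∑ l ∈ s, (if P l ∧ l.length ≤ s.sup List.length then f l else 0) := by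
        apply Finset.sum_le_sum
        intro l hl
        apply zo_ite_le
        exact fun h => ⟨h, Finset.le_sup hl⟩
    _ ≤ ∑' l : List Q, (if P l ∧ l.length ≤ s.sup List.length then f l else 0) :=
        ENNReal.sum_le_tsum s
    _ ≤ C := hM _

theorem zo_stepProb_eq (p : Q) (a : α) (q : Q) :
    A.stepProb p a q = if A.semStep p a q
      then (((Finset.univ.filter (fun r => A.semStep p a r)).card : ℕ) : ENNReal)⁻¹ else 0 := by
  rw [Layered.stepProb]
  congr 2
  rw [Nat.card_eq_fintype_card, Fintype.card_subtype]

theorem zo_spsum (a : α) (p : Q) : ∑ q : Q, A.stepProb p a q ≤ 1 := by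
  set S := Finset.univ.filter (fun r => A.semStep p a r) with hS
  have h1 : ∑ q : Q, A.stepProb p a q = ∑ q ∈ S, ((S.card : ℕ) : ENNReal)⁻¹ := by
    rw [Finset.sum_filter]
    apply Finset.sum_congr rfl
    intro q _
    rw [zo_stepProb_eq]
  rw [h1, Finset.sum_const, nsmul_eq_mul]
  rcases Nat.eq_zero_or_pos S.card with h | h
  · rw [h]; simp
  · rw [ENNReal.mul_inv_cancel (by exact_mod_cast h.ne') (ENNReal.natCast_ne_top _)]

theorem zo_failBound (j : ℕ) (p : Q) (hopp : zoOpp A w j p) :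
    ∑ q ∈ Finset.univ.filter (fun q => ¬ zoTakn A w j p q), A.stepProb p (w j) q
      ≤ 1 - zoEps Q := by
  obtain ⟨qs, hstep, htakn⟩ := hopp
  set S := Finset.univ.filter (fun r => A.semStep p (w j) r) with hS
  have hqs : qs ∈ S := Finset.mem_filter.2 ⟨Finset.mem_univ _, hstep⟩
  have hsum_all : ∑ q ∈ S, A.stepProb p (w j) q = 1 := by
    have h1 : ∑ q ∈ S, A.stepProb p (w j) q = ∑ q ∈ S, ((S.card : ℕ) : ENNReal)⁻¹ := by
      apply Finset.sum_congr rfl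
      intro q hq
      rw [zo_stepProb_eq, if_pos (Finset.mem_filter.1 hq).2]
    rw [h1, Finset.sum_const, nsmul_eq_mul]
    have hScard : 0 < S.card := Finset.card_pos.2 ⟨qs, hqs⟩
    rw [ENNReal.mul_inv_cancel (by exact_mod_cast hScard.ne') (ENNReal.natCast_ne_top _)]
  have hsplit : ∑ q ∈ Finset.univ.filter (fun q => ¬ zoTakn A w j p q), A.stepProb p (w j) q
      = ∑ q ∈ S.filter (fun q => ¬ zoTakn A w j p q), A.stepProb p (w j) q := by
    rw [Finset.filter_filter]
    rw [Finset.sum_filter, Finset.sum_filter]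
    apply Finset.sum_congr rfl
    intro q _
    by_cases ht : zoTakn A w j p q
    · simp [ht]
    · simp only [ht, not_false_iff, if_true, if_pos]
      by_cases hs : A.semStep p (w j) q
      · simp [hs]
      · have : A.stepProb p (w j) q = 0 := by rw [zo_stepProb_eq, if_neg hs]
        simp [hs, this]
  have hnotmem : qs ∉ S.filter (fun q => ¬ zoTakn A w j p q) := by
    intro hmem
    exact (Finset.mem_filter.1 hmem).2 htakn
  have hsubset : insert qs (S.filter (fun q => ¬ zoTakn A w j p q)) ⊆ S := by
    intro q hq
    rcases Finset.mem_insert.1 hq with h | h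
    · rw [h]; exact hqs
    · exact Finset.filter_subset _ _ h
  have hbound : (∑ q ∈ S.filter (fun q => ¬ zoTakn A w j p q), A.stepProb p (w j) q)
      + A.stepProb p (w j) qs ≤ 1 := by
    rw [← hsum_all, add_comm, ← Finset.sum_insert hnotmem]
    exact Finset.sum_le_sum_of_subset hsubset
  have heps : zoEps Q ≤ A.stepProb p (w j) qs := by
    rw [zo_stepProb_eq, if_pos hstep, zoEps]
    apply ENNReal.inv_le_inv'
    exact_mod_cast Finset.card_le_univ S
  rw [hsplit]
  have hepstop : zoEps Q ≠ ⊤ := by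
    rw [zoEps]
    refine ENNReal.inv_ne_top.2 ?_
    have hpos : 0 < Fintype.card Q := Fintype.card_pos_iff.2 ⟨qs⟩
    exact_mod_cast hpos.ne'
  apply ENNReal.le_sub_of_add_le_right hepstop
  calc (∑ q ∈ S.filter (fun q => ¬ zoTakn A w j p q), A.stepProb p (w j) q) + zoEps Q
      ≤ (∑ q ∈ S.filter (fun q => ¬ zoTakn A w j p q), A.stepProb p (w j) q)
        + A.stepProb p (w j) qs := add_le_add_right heps _
    _ ≤ 1 := hbound

theorem zo_sumb (M : ℕ) : ∀ (j : ℕ) (p : Q) (t k : ℕ), 1 ≤ k →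
    (∑' l : List Q, if zoPatOK A w j p t k l ∧ l.length ≤ M then zoMass A w j p l else 0)
      ≤ (1 - zoEps Q) ^ k := by
  induction M with
  | zero =>
      intro j p t k hk
      have : ∀ l : List Q,
          (if zoPatOK A w j p t k l ∧ l.length ≤ 0 then zoMass A w j p l else 0) = 0 := by
        intro l
        cases l with
        | nil => simp [zoPatOK]
        | cons q l => simp
      rw [tsum_congr this, tsum_zero]
      exact zero_le
  | succ M ih =>
      intro j p t k hk
      rw [zo_tsum_cons _ (by simp [zoPatOK])]
      have hpull : ∀ q : Q, (∑' l : List Q,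
          if zoPatOK A w j p t k (q :: l) ∧ (q :: l).length ≤ M + 1
            then zoMass A w j p (q :: l) else 0)
          = A.stepProb p (w j) q * ∑' l : List Q,
              (if zoPatOK A w j p t k (q :: l) ∧ l.length ≤ M then zoMass A w (j + 1) q l else 0) := by
        intro q
        rw [← ENNReal.tsum_mul_left]
        apply tsum_congr
        intro l
        have hiff : (zoPatOK A w j p t k (q :: l) ∧ (q :: l).length ≤ M + 1)
            ↔ (zoPatOK A w j p t k (q :: l) ∧ l.length ≤ M) := by
          simp [List.length_cons]
        by_cases hc : zoPatOK A w j p t k (q :: l) ∧ l.length ≤ M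
        · rw [if_pos (hiff.2 hc), if_pos hc, zoMass]
        · rw [if_neg (fun hx => hc (hiff.1 hx)), if_neg hc, mul_zero]
      rw [Finset.sum_congr rfl (fun q _ => hpull q)]
      clear hpull
      cases t with
      | succ t =>
          -- skip phase
          calc ∑ q : Q, A.stepProb p (w j) q * ∑' l : List Q,
                (if zoPatOK A w j p (t + 1) k (q :: l) ∧ l.length ≤ M
                  then zoMass A w (j + 1) q l else 0)
              ≤ ∑ q : Q, A.stepProb p (w j) q * (1 - zoEps Q) ^ k := by
                apply Finset.sum_le_sum
                intro q _
                apply mul_le_mul_right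
                have hcong : ∀ l : List Q, (zoPatOK A w j p (t + 1) k (q :: l) ∧ l.length ≤ M)
                    ↔ (zoPatOK A w (j + 1) q t k l ∧ l.length ≤ M) := by
                  intro l; simp [zoPatOK]
                rw [tsum_congr (fun l => zo_ite_congr (hcong l) (zoMass A w (j + 1) q l))]
                exact ih (j + 1) q t k hk
            _ = (∑ q : Q, A.stepProb p (w j) q) * (1 - zoEps Q) ^ k := by
                rw [Finset.sum_mul]
            _ ≤ 1 * (1 - zoEps Q) ^ k := by
                apply mul_le_mul_left
                exact zo_spsum A (w j) p
            _ = (1 - zoEps Q) ^ k := one_mul _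
      | zero =>
          by_cases hopp : zoOpp A w j p
          · -- opportunity at this step
            rcases Nat.lt_or_ge k 2 with hk2 | hk2
            · -- k = 1
              have hk1 : k = 1 := by omega
              subst hk1
              have hchar : ∀ (q : Q) (l : List Q),
                  (zoPatOK A w j p 0 1 (q :: l) ∧ l.length ≤ M)
                    ↔ (l = [] ∧ ¬ zoTakn A w j p q) := by
                intro q l
                constructor
                · rintro ⟨hpat, _⟩
                  cases l with
                  | nil => exact ⟨rfl, hpat.2.1⟩
                  | cons q' l =>
                      rcases hpat with ⟨_, _, h2, _⟩ | ⟨hno, _⟩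
                      · omega
                      · exact absurd hopp hno
                · rintro ⟨hl, ht⟩
                  subst hl
                  exact ⟨⟨hopp, ht, rfl⟩, by simp⟩
              calc ∑ q : Q, A.stepProb p (w j) q * ∑' l : List Q,
                    (if zoPatOK A w j p 0 1 (q :: l) ∧ l.length ≤ M
                      then zoMass A w (j + 1) q l else 0)
                  = ∑ q : Q, A.stepProb p (w j) q *
                      (if ¬ zoTakn A w j p q then 1 else 0) := by
                    apply Finset.sum_congr rfl
                    intro q _
                    congr 1
                    rw [tsum_congr (fun l => zo_ite_congr (hchar q l) (zoMass A w (j + 1) q l))]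
                    rw [tsum_eq_single ([] : List Q)]
                    · rw [zo_ite_congr (show (([] : List Q) = [] ∧ ¬ zoTakn A w j p q)
                          ↔ ¬ zoTakn A w j p q by simp) (zoMass A w (j+1) q [])]
                      rw [show zoMass A w (j+1) q [] = 1 from rfl]
                    · intro l hl
                      rw [if_neg]
                      intro hc
                      exact hl hc.1
                _ = ∑ q ∈ Finset.univ.filter (fun q => ¬ zoTakn A w j p q),
                      A.stepProb p (w j) q := by
                    rw [Finset.sum_filter]
                    apply Finset.sum_congr rfl
                    intro q _
                    rw [mul_ite, mul_one, mul_zero]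
                _ ≤ 1 - zoEps Q := zo_failBound A w j p hopp
                _ = (1 - zoEps Q) ^ 1 := (pow_one _).symm
            · -- k ≥ 2
              obtain ⟨k', rfl⟩ : ∃ k', k = k' + 1 := ⟨k - 1, by omega⟩
              have hchar : ∀ (q : Q) (l : List Q),
                  (zoPatOK A w j p 0 (k' + 1) (q :: l) ∧ l.length ≤ M)
                    ↔ (¬ zoTakn A w j p q ∧ (zoPatOK A w (j + 1) q 0 k' l ∧ l.length ≤ M)) := by
                intro q l
                constructor
                · rintro ⟨hpat, hlen⟩
                  cases l with
                  | nil => exact absurd hpat.2.2 (by omega)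
                  | cons q' l =>
                      rcases hpat with ⟨_, ht, _, hp⟩ | ⟨hno, _⟩
                      · refine ⟨ht, ?_, hlen⟩
                        simpa using hp
                      · exact absurd hopp hno
                · rintro ⟨ht, hp, hlen⟩
                  cases l with
                  | nil => exact absurd hp (by simp [zoPatOK])
                  | cons q' l =>
                      refine ⟨Or.inl ⟨hopp, ht, by omega, ?_⟩, hlen⟩
                      simpa using hp
              calc ∑ q : Q, A.stepProb p (w j) q * ∑' l : List Q,
                    (if zoPatOK A w j p 0 (k' + 1) (q :: l) ∧ l.length ≤ M
                      then zoMass A w (j + 1) q l else 0)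
                  ≤ ∑ q : Q, A.stepProb p (w j) q *
                      (if ¬ zoTakn A w j p q then (1 - zoEps Q) ^ k' else 0) := by
                    apply Finset.sum_le_sum
                    intro q _
                    apply mul_le_mul_right
                    rw [tsum_congr (fun l => zo_ite_congr (hchar q l) (zoMass A w (j + 1) q l))]
                    by_cases ht : zoTakn A w j p q
                    · rw [if_neg (by simpa using ht)]
                      have : ∀ l : List Q, (if ¬ zoTakn A w j p q ∧
                          (zoPatOK A w (j + 1) q 0 k' l ∧ l.length ≤ M)
                          then zoMass A w (j + 1) q l else 0) = 0 := by
                        intro l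
                        rw [if_neg]
                        intro hc
                        exact hc.1 ht
                      rw [tsum_congr this, tsum_zero]
                    · rw [if_pos ht]
                      have hcong2 : ∀ l : List Q, (¬ zoTakn A w j p q ∧
                          (zoPatOK A w (j + 1) q 0 k' l ∧ l.length ≤ M))
                          ↔ (zoPatOK A w (j + 1) q 0 k' l ∧ l.length ≤ M) := by
                        intro l
                        constructor
                        · exact fun h => h.2
                        · exact fun h => ⟨ht, h⟩
                      rw [tsum_congr (fun l => zo_ite_congr (hcong2 l) (zoMass A w (j + 1) q l))]
                      exact ih (j + 1) q 0 k' (by omega)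
                _ = (∑ q ∈ Finset.univ.filter (fun q => ¬ zoTakn A w j p q),
                      A.stepProb p (w j) q) * (1 - zoEps Q) ^ k' := by
                    rw [Finset.sum_filter, Finset.sum_mul]
                    apply Finset.sum_congr rfl
                    intro q _
                    rw [mul_ite, mul_zero, ite_mul, zero_mul]
                _ ≤ (1 - zoEps Q) * (1 - zoEps Q) ^ k' := by
                    apply mul_le_mul_left
                    exact zo_failBound A w j p hopp
                _ = (1 - zoEps Q) ^ (k' + 1) := (pow_succ' _ _).symm
          · -- no opportunity at this step
            have hchar : ∀ (q : Q) (l : List Q),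
                (zoPatOK A w j p 0 k (q :: l) ∧ l.length ≤ M)
                  ↔ (zoPatOK A w (j + 1) q 0 k l ∧ l.length ≤ M) := by
              intro q l
              constructor
              · rintro ⟨hpat, hlen⟩
                cases l with
                | nil => exact absurd hpat.1 hopp
                | cons q' l =>
                    rcases hpat with ⟨ho, _⟩ | ⟨_, hp⟩
                    · exact absurd ho hopp
                    · exact ⟨by simpa using hp, hlen⟩
              · rintro ⟨hp, hlen⟩
                cases l with
                | nil => exact absurd hp (by simp [zoPatOK])
                | cons q' l => exact ⟨Or.inr ⟨hopp, by simpa using hp⟩, hlen⟩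
            calc ∑ q : Q, A.stepProb p (w j) q * ∑' l : List Q,
                  (if zoPatOK A w j p 0 k (q :: l) ∧ l.length ≤ M
                    then zoMass A w (j + 1) q l else 0)
                ≤ ∑ q : Q, A.stepProb p (w j) q * (1 - zoEps Q) ^ k := by
                  apply Finset.sum_le_sum
                  intro q _
                  apply mul_le_mul_right
                  rw [tsum_congr (fun l => zo_ite_congr (hchar q l) (zoMass A w (j + 1) q l))]
                  exact ih (j + 1) q 0 k hk
              _ = (∑ q : Q, A.stepProb p (w j) q) * (1 - zoEps Q) ^ k := by
                  rw [Finset.sum_mul]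
              _ ≤ 1 * (1 - zoEps Q) ^ k := by
                  apply mul_le_mul_left
                  exact zo_spsum A (w j) p
              _ = (1 - zoEps Q) ^ k := one_mul _

end Prob

section TSet
open MeasureTheory

variable {Q α : Type} [Fintype Q] [MeasurableSpace Q] {d : ℕ}
variable (A : Layered Q α d) (w : ℕ → α) (q0 : Q)

/-- The bad event: from time `n0` on, no upgrade is ever taken although
opportunities occur infinitely often. -/
def zoTSet (n0 : ℕ) : Set (ℕ → Q) :=
  {ρ | A.IsSemRun w q0 ρ ∧ (∀ n, n0 ≤ n → ¬ zoTakn A w n (ρ n) (ρ (n + 1))) ∧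
    ∀ N, ∃ n, N ≤ n ∧ n0 ≤ n ∧ zoOpp A w n (ρ n)}

def zoTail (ρ : ℕ → Q) (j n : ℕ) : List Q := List.ofFn (fun i : Fin n => ρ (j + 1 + (i : ℕ)))

theorem zoTail_succ (ρ : ℕ → Q) (j n : ℕ) :
    zoTail ρ j (n + 1) = ρ (j + 1) :: zoTail ρ (j + 1) n := by
  rw [zoTail, zoTail, List.ofFn_succ]
  refine congrArg₂ List.cons ?_ (congrArg List.ofFn ?_)
  · simp
  · funext i
    congr 1
    rw [Fin.val_succ]
    omega

variable (ρ : ℕ → Q)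

theorem zo_cov_reach (n0 : ℕ) (K : ℕ)
    (hgoal : ∀ j, n0 ≤ j → zoOpp A w j (ρ j) →
      ∃ n, 1 ≤ n ∧ zoPatOK A w j (ρ j) 0 K (zoTail ρ j n)) :
    ∀ m j, n0 ≤ j → zoOpp A w (j + m) (ρ (j + m)) →
      (∀ i, i < m → ¬ zoOpp A w (j + i) (ρ (j + i))) →
      ∃ n, 1 ≤ n ∧ zoPatOK A w j (ρ j) 0 K (zoTail ρ j n) := by
  intro m
  induction m with
  | zero =>
      intro j hj hopp _
      exact hgoal j hj (by simpa using hopp)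
  | succ m ih =>
      intro j hj hopp hno
      have h0 : ¬ zoOpp A w j (ρ j) := by simpa using hno 0 (by omega)
      have e1 : j + (m + 1) = (j + 1) + m := by omega
      rw [e1] at hopp
      obtain ⟨n', hn', hpat⟩ := ih (j + 1) (by omega) hopp (fun i hi => by
        have := hno (i + 1) (by omega)
        have e : j + (i + 1) = (j + 1) + i := by omega
        rwa [e] at this)
      obtain ⟨n'', rfl⟩ : ∃ n'', n' = n'' + 1 := ⟨n' - 1, by omega⟩
      refine ⟨n'' + 1 + 1, by omega, ?_⟩
      rw [zoTail_succ]
      rw [zoTail_succ] at hpat ⊢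
      exact Or.inr ⟨h0, hpat⟩

theorem zo_cov_k (n0 : ℕ)
    (hfail : ∀ n, n0 ≤ n → ¬ zoTakn A w n (ρ n) (ρ (n + 1)))
    (hio : ∀ N, ∃ n, N ≤ n ∧ n0 ≤ n ∧ zoOpp A w n (ρ n)) :
    ∀ k, 1 ≤ k → ∀ j, n0 ≤ j →
      ∃ n, 1 ≤ n ∧ zoPatOK A w j (ρ j) 0 k (zoTail ρ j n) := by
  have hfind : ∀ j, ∃ m, zoOpp A w (j + m) (ρ (j + m)) := by
    intro j
    obtain ⟨n, hn1, _, hOpp⟩ := hio j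
    refine ⟨n - j, ?_⟩
    have e : j + (n - j) = n := by omega
    rw [e]
    exact hOpp
  have hreach : ∀ K, (∀ j, n0 ≤ j → zoOpp A w j (ρ j) →
      ∃ n, 1 ≤ n ∧ zoPatOK A w j (ρ j) 0 K (zoTail ρ j n)) →
      ∀ j, n0 ≤ j → ∃ n, 1 ≤ n ∧ zoPatOK A w j (ρ j) 0 K (zoTail ρ j n) := by
    intro K hgoal j hj
    exact zo_cov_reach A w ρ n0 K hgoal (Nat.find (hfind j)) j hj (Nat.find_spec (hfind j))
      (fun i hi => Nat.find_min (hfind j) hi)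
  intro k
  induction k with
  | zero => omega
  | succ k ih =>
      intro _ j hj
      rcases Nat.eq_zero_or_pos k with hk0 | hk1
      · -- k + 1 = 1
        subst hk0
        apply hreach 1 _ j hj
        intro j' hj' hopp'
        refine ⟨1, le_rfl, ?_⟩
        show zoPatOK A w j' (ρ j') 0 1 [ρ (j' + 1 + 0)]
        exact ⟨by simpa using hopp', by simpa using hfail j' hj', rfl⟩
      · -- k ≥ 1
        apply hreach (k + 1) _ j hj
        intro j' hj' hopp'
        obtain ⟨n', hn', hpat⟩ := ih hk1 (j' + 1) (by omega)
        obtain ⟨n'', rfl⟩ : ∃ n'', n' = n'' + 1 := ⟨n' - 1, by omega⟩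
        refine ⟨n'' + 1 + 1, by omega, ?_⟩
        rw [zoTail_succ]
        rw [zoTail_succ] at hpat ⊢
        exact Or.inl ⟨hopp', hfail j' hj', by omega, by simpa using hpat⟩

theorem zo_cov_skip (n0 : ℕ) {k : ℕ}
    (hC : ∀ j', n0 ≤ j' → ∃ n, 1 ≤ n ∧ zoPatOK A w j' (ρ j') 0 k (zoTail ρ j' n)) :
    ∀ t j, j + t = n0 → ∃ n, 1 ≤ n ∧ zoPatOK A w j (ρ j) t k (zoTail ρ j n) := by
  intro t
  induction t with
  | zero =>
      intro j hj
      exact hC j (by omega)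
  | succ t ih =>
      intro j hj
      obtain ⟨n', hn', hpat⟩ := ih (j + 1) (by omega)
      refine ⟨n' + 1, by omega, ?_⟩
      rw [zoTail_succ]
      exact hpat

theorem zo_tset_null (n0 : ℕ) (m : MeasureTheory.Measure (ℕ → Q))
    (hm : A.IsWalkMeasure w q0 m) : m (zoTSet A w q0 n0) = 0 := by
  have hbound : ∀ k, 1 ≤ k → m (zoTSet A w q0 n0) ≤ (1 - zoEps Q) ^ k := by
    intro k hk
    calc m (zoTSet A w q0 n0)
        ≤ ∑' l : {l : List Q // zoPatOK A w 0 q0 n0 k l}, zoMass A w 0 q0 (l : List Q) := by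
          apply zo_cover A w q0 m hm
          intro ρ hρ
          obtain ⟨hrun, hfail, hio⟩ := hρ
          obtain ⟨n, hn1, hpat⟩ :=
            zo_cov_skip A w ρ n0 (zo_cov_k A w ρ n0 hfail hio k hk) n0 0 (by omega)
          rw [hrun.1] at hpat
          have htail : zoTail ρ 0 n = zoPat ρ n := by
            rw [zoTail, zoPat]
            congr 1
            funext i
            congr 1
            omega
          rw [htail] at hpat
          exact ⟨zoPat ρ n, hpat, zo_mem_cyl q0 ρ n hrun.1⟩
      _ ≤ ∑' l : List Q, if zoPatOK A w 0 q0 n0 k l then zoMass A w 0 q0 l else 0 :=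
          zo_tsum_subtype_le _ _
      _ ≤ (1 - zoEps Q) ^ k := by
          apply zo_tsum_trunc
          intro M
          exact zo_sumb A w M 0 q0 n0 k hk
  have heps : zoEps Q ≠ 0 := by
    rw [zoEps]
    exact ENNReal.inv_ne_zero.2 (ENNReal.natCast_ne_top _)
  have hlt : 1 - zoEps Q < 1 :=
    ENNReal.sub_lt_self ENNReal.one_ne_top one_ne_zero heps
  have htend : Filter.Tendsto (fun k : ℕ => (1 - zoEps Q) ^ (k + 1)) Filter.atTop (nhds 0) :=
    (ENNReal.tendsto_pow_atTop_nhds_zero_of_lt_one hlt).comp (Filter.tendsto_add_atTop_nat 1)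
  refine le_antisymm ?_ (zero_le)
  exact ge_of_tendsto' htend (fun k => hbound (k + 1) (by omega))

theorem zo_good_run_trap (hρ : A.IsSemRun w q0 ρ)
    (hnotT : ∀ n0 : ℕ, ρ ∉ zoTSet A w q0 n0) :
    ∃ n t, A.layer t = minInfOften (A.runPrios w ρ) ∧ zoGoodTrap A w q0 n t := by
  have hfin : ¬ ∀ n0, ∃ n, n0 ≤ n ∧ zoTakn A w n (ρ n) (ρ (n + 1)) :=
    fun h => zo_finSucc A w q0 ρ hρ h
  push_neg at hfin
  obtain ⟨n0, hn0⟩ := hfin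
  have hfail : ∀ n, n0 ≤ n → ¬ zoTakn A w n (ρ n) (ρ (n + 1)) :=
    fun n hn ht => (hn0 n) hn ht
  have hT := hnotT n0
  rw [zoTSet, Set.mem_setOf_eq] at hT
  push_neg at hT
  obtain ⟨N, hN⟩ := hT hρ hfail
  set L := minInfOften (A.runPrios w ρ) with hLdef
  have hub : ∀ n, A.runPrios w ρ n ≤ d := fun n => zo_semPrio_le_d A _ _
  have hios : ∀ N', ∃ n, N' ≤ n ∧ A.semPrio (ρ n) (w n) = L :=
    zo_mio_mem (A.runPrios w ρ) d hub
  have hL1 : 1 ≤ L := by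
    obtain ⟨n, _, hn⟩ := hios 0
    rw [← hn]
    exact zo_semPrio_pos A _ _
  obtain ⟨N0, hN0⟩ := zo_mio_eventually_le (A.runPrios w ρ)
  set N1 := max (max N n0) N0 with hN1def
  have hN1 : ∀ n, N1 ≤ n → L ≤ A.semPrio (ρ n) (w n) := fun n hn => hN0 n (by omega)
  have hnoopp : ∀ n, N1 ≤ n → A.semPrio (ρ n) (w n) = L → ¬ zoOpp A w n (ρ n) := by
    intro n hn _ hopp
    exact hN n (by omega) (by omega) hopp
  obtain ⟨hl, hgt⟩ := zo_trap A w q0 ρ hρ hL1 hN1 hios hnoopp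
  exact ⟨N1, _, hl, hgt⟩

end TSet
end ZOAux





/-- For a consistent layered automaton `A`, the automaton `⟦A⟧` is
0-1 probabilistic: the random walk over a word `w` produces an accepting run with
probability `1` if `w ∈ L(⟦A⟧)`, and with probability `0` if `w ∉ L(⟦A⟧)`. -/
theorem statement_3 {Q α : Type} [Fintype Q] [Fintype α] [Nonempty α] [MeasurableSpace Q]
    {d : ℕ} (hd : 1 ≤ d)
    (A : Layered Q α d) (hcons : A.Consistent)
    (q0 : Q) (hq0 : A.IsLeaf q0) (hq0' : A.muHat 1 q0 = A.init)
    (w : ℕ → α) (m : MeasureTheory.Measure (ℕ → Q)) (hm : A.IsWalkMeasure w q0 m) :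
    (A.SemAccept q0 w → m {ρ : ℕ → Q | ParityAccept (A.runPrios w ρ)} = 1) ∧
    (¬ A.SemAccept q0 w → m {ρ : ℕ → Q | ParityAccept (A.runPrios w ρ)} = 0) := by
  constructor
  · -- accepted: probability 1
    intro hacc
    have hET : zoET A w q0 := by
      by_contra hET
      exact zo_G2 A w q0 hET hacc
    have hOT : ¬ zoOT A w q0 := fun hot => zo_not_both A w q0 hcons ⟨hET, hot⟩
    have hbad : m ({ρ : ℕ → Q | ¬ A.IsSemRun w q0 ρ} ∪ ⋃ n0 : ℕ, zoTSet A w q0 n0) = 0 := by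
      apply MeasureTheory.measure_union_null
      · exact zo_nonruns_null A w q0 m hm
      · exact MeasureTheory.measure_iUnion_null (fun n0 => zo_tset_null A w q0 n0 m hm)
    have hsub : {ρ : ℕ → Q | ParityAccept (A.runPrios w ρ)}ᶜ ⊆
        {ρ : ℕ → Q | ¬ A.IsSemRun w q0 ρ} ∪ ⋃ n0 : ℕ, zoTSet A w q0 n0 := by
      intro ρ hρmem
      by_contra hc
      simp only [Set.mem_union, Set.mem_iUnion, Set.mem_setOf_eq, not_or, not_exists,
        not_not] at hc
      obtain ⟨hrun, hT⟩ := hc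
      obtain ⟨n, t, hlt, hgt⟩ := zo_good_run_trap A w q0 ρ hrun hT
      rcases Nat.even_or_odd (A.layer t) with he | ho
      · apply hρmem
        show ParityAccept (A.runPrios w ρ)
        rw [ParityAccept, ← hlt]
        exact he
      · exact hOT ⟨n, t, ho, hgt⟩
    haveI hprob := hm.1
    have h0 : m {ρ : ℕ → Q | ParityAccept (A.runPrios w ρ)}ᶜ = 0 :=
      le_antisymm (le_trans (MeasureTheory.measure_mono hsub) (le_of_eq hbad)) (zero_le)
    apply le_antisymm
    · exact le_trans (MeasureTheory.measure_mono (Set.subset_univ _)) (le_of_eq MeasureTheory.measure_univ)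
    · calc (1 : ENNReal) = m Set.univ := MeasureTheory.measure_univ.symm
        _ ≤ m {ρ : ℕ → Q | ParityAccept (A.runPrios w ρ)} +
            m {ρ : ℕ → Q | ParityAccept (A.runPrios w ρ)}ᶜ := by
            rw [← Set.union_compl_self {ρ : ℕ → Q | ParityAccept (A.runPrios w ρ)}]
            exact MeasureTheory.measure_union_le _ _
        _ = m {ρ : ℕ → Q | ParityAccept (A.runPrios w ρ)} := by rw [h0, add_zero]
  · -- rejected: probability 0
    intro hnacc
    have hOT : zoOT A w q0 := by
      by_contra hOT
      exact hnacc (zo_G1 A w q0 hOT)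
    have hET : ¬ zoET A w q0 := fun het => zo_not_both A w q0 hcons ⟨het, hOT⟩
    have hbad : m ({ρ : ℕ → Q | ¬ A.IsSemRun w q0 ρ} ∪ ⋃ n0 : ℕ, zoTSet A w q0 n0) = 0 := by
      apply MeasureTheory.measure_union_null
      · exact zo_nonruns_null A w q0 m hm
      · exact MeasureTheory.measure_iUnion_null (fun n0 => zo_tset_null A w q0 n0 m hm)
    have hsub : {ρ : ℕ → Q | ParityAccept (A.runPrios w ρ)} ⊆
        {ρ : ℕ → Q | ¬ A.IsSemRun w q0 ρ} ∪ ⋃ n0 : ℕ, zoTSet A w q0 n0 := by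
      intro ρ hρmem
      by_contra hc
      simp only [Set.mem_union, Set.mem_iUnion, Set.mem_setOf_eq, not_or, not_exists,
        not_not] at hc
      obtain ⟨hrun, hT⟩ := hc
      obtain ⟨n, t, hlt, hgt⟩ := zo_good_run_trap A w q0 ρ hrun hT
      rcases Nat.even_or_odd (A.layer t) with he | ho
      · exact hET ⟨n, t, he, hgt⟩
      · rw [Set.mem_setOf_eq, ParityAccept, ← hlt] at hρmem
        exact (Nat.not_even_iff_odd.2 ho) hρmem
    exact le_antisymm (le_trans (MeasureTheory.measure_mono hsub) (le_of_eq hbad)) (zero_le)
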